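/- arXiv:2101.03081 — 6 statements merged into one kernel-verified Lean document; each statement's English description precedes it below -/
import Mathlib

section
/- Let B be a polymatroidal basis of degree d in n variables and let α, β ∈ B with α(i) > β(i) for some index i. Then there exists an index j with α(j) < β(j) such that both γ and δ lie in B, where γ + e_i = α + e_j (i.e. γ = α − e_i + e_j) and δ + e_j = β + e_i (i.e. δ = β − e_j + e_i). -/
/-- The `i`-th standard unit exponent vector. -/
def eVec {n : ℕ} (i : Fin n) : Fin n → ℕ := fun j => if j = i then 1 else 0

/-- A finite nonempty set `B` of exponent vectors is a polymatroidal basis of degree `d` if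
every `α ∈ B` has degree `d` and whenever `α, β ∈ B` with `α i > β i` for some `i`, there is
`j` with `α j < β j` and an element `γ ∈ B` with `γ + e i = α + e j`. -/
def IsPolymatroidal {n : ℕ} (B : Finset (Fin n → ℕ)) (d : ℕ) : Prop :=
  B.Nonempty ∧ (∀ α ∈ B, ∑ i, α i = d) ∧
    ∀ α ∈ B, ∀ β ∈ B, ∀ i : Fin n, β i < α i →
      ∃ j : Fin n, α j < β j ∧ ∃ γ ∈ B, γ + eVec i = α + eVec j

namespace SymExchAux

/-- L1 distance between exponent vectors. -/
def D {n : ℕ} (α β : Fin n → ℕ) : ℕ := ∑ k, ((α k - β k) + (β k - α k))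

lemma D_symm {n : ℕ} (α β : Fin n → ℕ) : D α β = D β α :=
  Finset.sum_congr rfl (fun k _ => by omega)

lemma move_apply {n : ℕ} {γ α : Fin n → ℕ} {i j : Fin n}
    (h : γ + eVec i = α + eVec j) (k : Fin n) :
    γ k + (if k = i then 1 else 0) = α k + (if k = j then 1 else 0) := by
  have := congrFun h k
  simpa [eVec, Pi.add_apply] using this

lemma D_lt {n : ℕ} {α β γ : Fin n → ℕ} {i j : Fin n} (h1 : β i < α i) (h2 : α j < β j)
    (heq : γ + eVec i = α + eVec j) : D γ β < D α β := by
  have hij : i ≠ j := by intro h; subst h; omega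
  apply Finset.sum_lt_sum
  · intro k _
    have e := move_apply heq k
    by_cases hki : k = i
    · subst hki; rw [if_pos rfl, if_neg hij] at e; omega
    · by_cases hkj : k = j
      · subst hkj; rw [if_neg hki, if_pos rfl] at e; omega
      · rw [if_neg hki, if_neg hkj] at e; omega
  · refine ⟨i, Finset.mem_univ i, ?_⟩
    have e := move_apply heq i
    rw [if_pos rfl, if_neg hij] at e
    omega

lemma exists_lt {n : ℕ} {α β : Fin n → ℕ} (hs : ∑ k, α k = ∑ k, β k) {i : Fin n}
    (hi : β i < α i) : ∃ j, α j < β j := by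
  by_contra hcon
  push_neg at hcon
  have : ∑ k, β k < ∑ k, α k :=
    Finset.sum_lt_sum (fun k _ => hcon k) ⟨i, Finset.mem_univ i, hi⟩
  omega

/-- Forcing lemma: if `W = β + 2eᵢ - eₚ - e_q ∈ B` with `p, q ≠ i`, then `β - eₚ + eᵢ ∈ B`. -/
lemma force {n d : ℕ} {B : Finset (Fin n → ℕ)}
    (hax : ∀ α ∈ B, ∀ β ∈ B, ∀ i : Fin n, β i < α i →
      ∃ j : Fin n, α j < β j ∧ ∃ γ ∈ B, γ + eVec i = α + eVec j)
    {β W : Fin n → ℕ} (hβ : β ∈ B) (hW : W ∈ B) {p q i : Fin n}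
    (hp : p ≠ i) (hq : q ≠ i)
    (heq : ∀ k, W k + eVec p k + eVec q k = β k + 2 * eVec i k) :
    ∃ δ ∈ B, δ + eVec p = β + eVec i := by
  have hd : d = d := rfl
  have hWp : W p < β p := by
    have e := heq p
    simp [eVec, hp] at e
    split_ifs at e <;> omega
  obtain ⟨l, hl, δ, hδB, hδ⟩ := hax β hβ W hW p hWp
  have hli : l = i := by
    by_contra hne
    have e := heq l
    simp [eVec, hne] at e
    split_ifs at e <;> omega
  subst hli
  exact ⟨δ, hδB, hδ⟩

/-- Half (co-)exchange: there is `j` with `α j < β j` and `β - e_j + e_i ∈ B`. -/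
lemma half {n d : ℕ} {B : Finset (Fin n → ℕ)} (hB : IsPolymatroidal B d) :
    ∀ N : ℕ, ∀ α β : Fin n → ℕ, α ∈ B → β ∈ B → D α β < N →
      ∀ i : Fin n, β i < α i →
      ∃ j, α j < β j ∧ ∃ δ ∈ B, δ + eVec j = β + eVec i := by
  obtain ⟨-, hdeg, hax⟩ := hB
  intro N
  induction N with
  | zero => intro α β _ _ hD; exact absurd hD (Nat.not_lt_zero _)
  | succ N ih =>
    intro α β hα hβ hD i hi
    by_cases hcase : ∃ k, k ≠ i ∧ β k < α k
    · -- Case I: another coordinate where α exceeds β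
      obtain ⟨k, hki, hk⟩ := hcase
      obtain ⟨j, hj, γ, hγB, hγ⟩ := hax α hα β hβ k hk
      have hkj : k ≠ j := by intro h; subst h; omega
      have hγi : γ i = α i := by
        have e := move_apply hγ i
        rw [if_neg (Ne.symm hki), if_neg (by intro h; subst h; omega : i ≠ j)] at e
        omega
      have hDlt : D γ β < D α β := D_lt hk hj hγ
      obtain ⟨j₁, hj₁, δ, hδB, hδ⟩ := ih γ β hγB hβ (by omega) i (by omega)
      refine ⟨j₁, ?_, δ, hδB, hδ⟩
      have e := move_apply hγ j₁
      by_cases h1 : j₁ = k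
      · subst h1; rw [if_pos rfl, if_neg hkj] at e; omega
      · by_cases h2 : j₁ = j
        · subst h2; rw [if_neg h1, if_pos rfl] at e; omega
        · rw [if_neg h1, if_neg h2] at e; omega
    · -- Case II: i is the only coordinate where α exceeds β; the axiom output is forced
      push_neg at hcase
      have hsum : ∑ k, α k = ∑ k, β k := by rw [hdeg α hα, hdeg β hβ]
      obtain ⟨a, ha⟩ := exists_lt hsum hi
      obtain ⟨l, hl, δ, hδB, hδ⟩ := hax β hβ α hα a ha
      have hli : l = i := by
        by_contra hne
        have := hcase l hne
        omega
      subst hli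
      exact ⟨a, ha, δ, hδB, hδ⟩

/-- Full symmetric exchange, by strong induction on the distance. -/
lemma full {n d : ℕ} {B : Finset (Fin n → ℕ)} (hB : IsPolymatroidal B d) :
    ∀ N : ℕ, ∀ α β : Fin n → ℕ, α ∈ B → β ∈ B → D α β < N →
      ∀ i : Fin n, β i < α i →
      ∃ j : Fin n, α j < β j ∧ (∃ γ ∈ B, γ + eVec i = α + eVec j) ∧
        (∃ δ ∈ B, δ + eVec j = β + eVec i) := by
  have hax := hB.2.2
  intro N
  induction N with
  | zero => intro α β _ _ hD; exact absurd hD (Nat.not_lt_zero _)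
  | succ N ih =>
    intro α β hα hβ hD i hi
    obtain ⟨j₁, hj₁, δ₁, hδ₁B, hδ₁⟩ :=
      half hB (D α β + 1) α β hα hβ (Nat.lt_succ_self _) i hi
    have hij₁ : i ≠ j₁ := by intro h; subst h; omega
    have hδ₁i : δ₁ i = β i + 1 := by
      have e := move_apply hδ₁ i
      rw [if_neg hij₁, if_pos rfl] at e
      omega
    by_cases hA : β i + 1 < α i
    · -- Case A: α i ≥ β i + 2
      have hDlt : D α δ₁ < D α β := by
        rw [D_symm α δ₁, D_symm α β]
        exact D_lt hj₁ hi hδ₁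
      obtain ⟨m, hm, ⟨γ', hγ'B, hγ'⟩, ⟨W, hWB, hW⟩⟩ :=
        ih α δ₁ hα hδ₁B (by omega) i (by omega)
      have hmi : m ≠ i := by intro h; subst h; omega
      have hmβ : α m < β m := by
        have e := move_apply hδ₁ m
        rw [if_neg hmi] at e
        split_ifs at e <;> omega
      have hforce : ∀ k, W k + eVec m k + eVec j₁ k = β k + 2 * eVec i k := by
        intro k
        have e1 := move_apply hW k
        have e2 := move_apply hδ₁ k
        simp only [eVec]
        split_ifs at e1 e2 ⊢ <;> omega
      obtain ⟨δ, hδB, hδ⟩ := force (d := d) hax hβ hWB hmi (Ne.symm hij₁) hforce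
      exact ⟨m, hmβ, ⟨γ', hγ'B, hγ'⟩, ⟨δ, hδB, hδ⟩⟩
    · -- Case B: α i = β i + 1
      obtain ⟨l, hl, A₁, hA₁B, hA₁⟩ :=
        half hB (D β α + 1) β α hβ hα (Nat.lt_succ_self _) j₁ hj₁
      by_cases hli : l = i
      · subst hli
        exact ⟨j₁, hj₁, ⟨A₁, hA₁B, hA₁⟩, ⟨δ₁, hδ₁B, hδ₁⟩⟩
      · have hlj₁ : l ≠ j₁ := by intro h; subst h; omega
        have hA₁i : A₁ i = α i := by
          have e := move_apply hA₁ i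
          rw [if_neg (fun h => hli h.symm), if_neg hij₁] at e
          omega
        have hA₁l : A₁ l + 1 = α l := by
          have e := move_apply hA₁ l
          rw [if_pos rfl, if_neg hlj₁] at e
          omega
        have hDlt : D A₁ β < D α β := D_lt hl hj₁ hA₁
        obtain ⟨p, hp, ⟨V, hVB, hV⟩, ⟨δ₂, hδ₂B, hδ₂⟩⟩ :=
          ih A₁ β hA₁B hβ (by omega) i (by omega)
        have hpi : p ≠ i := by intro h; subst h; omega
        have hpl : p ≠ l := by intro h; subst h; omega
        have hpβ : α p < β p := by
          have e := move_apply hA₁ p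
          rw [if_neg hpl] at e
          split_ifs at e <;> omega
        have hVi : V i + 1 = α i := by
          have e := move_apply hV i
          rw [if_pos rfl, if_neg (Ne.symm hpi)] at e
          omega
        obtain ⟨q, hq, γ, hγB, hγ⟩ := hax α hα V hVB i (by omega)
        have hqcases : q = j₁ ∨ q = p := by
          by_contra hcon
          push_neg at hcon
          have e1 := move_apply hV q
          have e2 := move_apply hA₁ q
          rw [if_neg hcon.2] at e1
          rw [if_neg hcon.1] at e2
          split_ifs at e1 e2 <;> omega
        rcases hqcases with h | h
        · subst h
          exact ⟨q, hj₁, ⟨γ, hγB, hγ⟩, ⟨δ₁, hδ₁B, hδ₁⟩⟩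
        · subst h
          exact ⟨q, hpβ, ⟨γ, hγB, hγ⟩, ⟨δ₂, hδ₂B, hδ₂⟩⟩

end SymExchAux

/-- **Symmetric exchange property.** -/
theorem symmetric_exchange {n d : ℕ} (B : Finset (Fin n → ℕ))
    (hB : IsPolymatroidal B d) {α β : Fin n → ℕ} (hα : α ∈ B) (hβ : β ∈ B)
    {i : Fin n} (hi : β i < α i) :
    ∃ j : Fin n, α j < β j ∧ (∃ γ ∈ B, γ + eVec i = α + eVec j) ∧
      (∃ δ ∈ B, δ + eVec j = β + eVec i) := by
  exact SymExchAux.full hB (SymExchAux.D α β + 1) α β hα hβ (Nat.lt_succ_self _) i hi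
end

section
/- Let B be a finite nonempty basis with the strong exchange property (SEP) of degree d in n variables. Then B consists exactly of all exponent vectors α with deg(α) = d and min_B(i) ≤ α(i) ≤ max_B(i) for every index i. -/
/-- A finite nonempty set `B` of exponent vectors is a basis with the strong exchange
property (SEP) of degree `d` if every `α ∈ B` has degree `d` and whenever `α, β ∈ B`
with `α i > β i` and `α j < β j`, there is `γ ∈ B` with `γ + e i = α + e j`. -/
def IsSEP {n : ℕ} (B : Finset (Fin n → ℕ)) (d : ℕ) : Prop :=
  B.Nonempty ∧ (∀ α ∈ B, ∑ i, α i = d) ∧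
    ∀ α ∈ B, ∀ β ∈ B, ∀ i j : Fin n, β i < α i → α j < β j →
      ∃ γ ∈ B, γ + eVec i = α + eVec j

lemma exists_lt_of_sum_eq {n : ℕ} {f g : Fin n → ℕ}
    (h : ∑ i, f i = ∑ i, g i) (hne : f ≠ g) : ∃ i, f i < g i := by
  by_contra hc
  push_neg at hc
  have := (Finset.sum_eq_sum_iff_of_le (fun i _ => hc i)).1 h.symm
  exact hne (funext fun i => ((this i (Finset.mem_univ i)).symm))

lemma exists_delta {n d : ℕ} {B : Finset (Fin n → ℕ)} (hB : IsSEP B d)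
    (H : B.Nonempty) {i j : Fin n} (hij : i ≠ j) (β : Fin n → ℕ)
    (hβj : ∃ ε ∈ B, β j < ε j)
    (hstart : ∃ δ ∈ B, δ i < β i) :
    ∃ δ ∈ B, δ i < β i ∧ β j < δ j := by
  obtain ⟨ε, hε, hβε⟩ := hβj
  obtain ⟨δ0, hδ0, hδ0i⟩ := hstart
  suffices h : ∀ t, ∀ δ ∈ B, δ i < β i → β j + 1 - δ j ≤ t →
      ∃ δ' ∈ B, δ' i < β i ∧ β j < δ' j from
    h (β j + 1) δ0 hδ0 hδ0i (by omega)
  intro t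
  induction t with
  | zero => exact fun δ hδ hδi ht => ⟨δ, hδ, hδi, by omega⟩
  | succ t ih =>
    intro δ hδ hδi ht
    by_cases hlt : β j < δ j
    · exact ⟨δ, hδ, hδi, hlt⟩
    · push_neg at hlt
      have hδε : δ j < ε j := by omega
      have hsum : ∑ k, ε k = ∑ k, δ k := by
        rw [hB.2.1 ε hε, hB.2.1 δ hδ]
      have hεδ : ε ≠ δ := fun h => by rw [h] at hδε; omega
      obtain ⟨k, hk⟩ := exists_lt_of_sum_eq hsum hεδ
      obtain ⟨γ, hγB, hγ⟩ := hB.2.2 δ hδ ε hε k j hk hδε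
      have hco : ∀ m, γ m + (if m = k then 1 else 0) = δ m + (if m = j then 1 else 0) := by
        intro m
        have := congrFun hγ m
        simpa [eVec] using this
      have hkj : k ≠ j := fun h => by rw [h] at hk; omega
      have hγj : γ j = δ j + 1 := by
        have h := hco j; simpa [hkj, Ne.symm hkj] using h
      have hγi : γ i < β i := by
        rcases eq_or_ne i k with rfl | hik
        · have h := hco i
          simp [hij] at h
          omega
        · have h := hco i
          simp [hik, hij] at h
          omega
      exact ih γ hγB hγi (by omega)

lemma exchange_step {n d : ℕ} {B : Finset (Fin n → ℕ)} (hB : IsSEP B d)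
    (H : B.Nonempty) (β : Fin n → ℕ) (hβ : β ∈ B) (i j : Fin n)
    (hi : B.inf' H (fun δ => δ i) < β i) (hj : β j < B.sup' H (fun δ => δ j)) :
    ∃ γ ∈ B, γ + eVec i = β + eVec j := by
  by_cases hij : i = j
  · exact ⟨β, hβ, by rw [hij]⟩
  · obtain ⟨δ0, hδ0, hδ0i⟩ := B.exists_mem_eq_inf' H (fun δ => δ i)
    have h0 : δ0 i < β i := hδ0i ▸ hi
    obtain ⟨ε, hε, hεj⟩ := B.exists_mem_eq_sup' H (fun δ => δ j)
    have h1 : β j < ε j := hεj ▸ hj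
    obtain ⟨δ, hδ, hδi, hδj⟩ := exists_delta hB H hij β ⟨ε, hε, h1⟩ ⟨δ0, hδ0, h0⟩
    exact hB.2.2 β hβ δ hδ i j hδi hδj

/-- A basis with the SEP consists exactly of all exponent vectors of degree `d` whose
entries are pinched between the coordinatewise minima and maxima of `B`. -/
theorem sep_is_veronese_type {n d : ℕ} (B : Finset (Fin n → ℕ))
    (hB : IsSEP B d) (hne : B.Nonempty) :
    ∀ α : Fin n → ℕ, α ∈ B ↔
      ((∑ i, α i) = d ∧ ∀ i : Fin n,
        B.inf' hne (fun β => β i) ≤ α i ∧ α i ≤ B.sup' hne (fun β => β i)) := by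
  intro α
  constructor
  · intro hα
    exact ⟨hB.2.1 α hα, fun i => ⟨Finset.inf'_le (fun β => β i) hα, Finset.le_sup' (fun β => β i) hα⟩⟩
  · rintro ⟨hsum, hbound⟩
    suffices h : ∀ t, ∀ β ∈ B, (∑ k, ((α k - β k) + (β k - α k))) ≤ t → α ∈ B by
      obtain ⟨β, hβ⟩ := hne
      exact h _ β hβ le_rfl
    intro t
    induction t with
    | zero =>
      intro β hβ ht
      have h0 : ∀ k ∈ Finset.univ, (α k - β k) + (β k - α k) = 0 :=
        Finset.sum_eq_zero_iff.1 (Nat.le_zero.1 ht)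
      have : α = β := funext fun k => by
        have := h0 k (Finset.mem_univ k); omega
      exact this ▸ hβ
    | succ t ih =>
      intro β hβ ht
      by_cases hab : α = β
      · exact hab ▸ hβ
      · have hs : ∑ k, α k = ∑ k, β k := by rw [hsum, hB.2.1 β hβ]
        obtain ⟨i, hi⟩ := exists_lt_of_sum_eq hs hab
        obtain ⟨j, hj⟩ := exists_lt_of_sum_eq hs.symm (fun h => hab h.symm)
        have hij : i ≠ j := fun h => by rw [h] at hi; omega
        have hi' : B.inf' hne (fun δ => δ i) < β i :=
          lt_of_le_of_lt (hbound i).1 hi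
        have hj' : β j < B.sup' hne (fun δ => δ j) :=
          lt_of_lt_of_le hj (hbound j).2
        obtain ⟨γ, hγB, hγ⟩ := exchange_step hB hne β hβ i j hi' hj'
        clear hi' hj'
        have hco : ∀ m, γ m + (if m = i then 1 else 0) = β m + (if m = j then 1 else 0) := by
          intro m
          have := congrFun hγ m
          simpa [eVec] using this
        have hgi : γ i + 1 = β i := by
          have h := hco i; simpa [hij] using h
        have hgj : γ j = β j + 1 := by
          have h := hco j; simpa [Ne.symm hij] using h
        have hgk : ∀ k, k ≠ i → k ≠ j → γ k = β k := fun k h2 h3 => by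
          have h := hco k; simpa [h2, h3] using h
        have hlt : ∑ k, ((α k - γ k) + (γ k - α k)) <
            ∑ k, ((α k - β k) + (β k - α k)) := by
          apply Finset.sum_lt_sum
          · intro k _
            rcases eq_or_ne k i with rfl | h2
            · omega
            · rcases eq_or_ne k j with rfl | h3
              · omega
              · have := hgk k h2 h3; omega
          · exact ⟨i, Finset.mem_univ i, by omega⟩
        exact ih γ hγB (by omega)
end

section
/- Let B be a finite nonempty basis with the strong exchange property (SEP) of degree d in n variables. If α ∈ B satisfies α(i) > min_B(i) and α(j) < max_B(j) for indices i and j, then the exponent vector γ with γ + e_i = α + e_j (i.e. γ = α − e_i + e_j) also belongs to B. -/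
/-- If `α ∈ B` with `α i > min_B(i)` and `α j < max_B(j)` then `α − e_i + e_j ∈ B`. -/
theorem sep_exchange_min_max {n d : ℕ} (B : Finset (Fin n → ℕ))
    (hB : IsSEP B d) (hne : B.Nonempty) {α : Fin n → ℕ} (hα : α ∈ B) {i j : Fin n}
    (hi : B.inf' hne (fun β => β i) < α i) (hj : α j < B.sup' hne (fun β => β j)) :
    ∃ γ ∈ B, γ + eVec i = α + eVec j := by
  obtain ⟨-, hdeg, hsep⟩ := hB
  by_cases hij : i = j
  · exact ⟨α, hα, by rw [hij]⟩
  -- the set of elements with j-th coordinate bigger than α j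
  set S : Finset (Fin n → ℕ) := B.filter (fun β => α j < β j) with hSdef
  have hSne : S.Nonempty := by
    obtain ⟨β, hβ, hβj⟩ := Finset.exists_mem_eq_sup' hne (fun β => β j)
    exact ⟨β, Finset.mem_filter.mpr ⟨hβ, by rw [← hβj]; exact hj⟩⟩
  obtain ⟨β, hβS, hβmin⟩ := S.exists_min_image (fun β => β i) hSne
  obtain ⟨hβB, hβj⟩ := Finset.mem_filter.mp hβS
  by_cases hβi : β i < α i
  · exact hsep α hα β hβB i j hβi hβj
  · -- β i ≥ α i ; derive a contradiction with minimality
    exfalso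
    push_neg at hβi
    obtain ⟨δ, hδB, hδi⟩ := Finset.exists_mem_eq_inf' hne (fun β => β i)
    have hδβ : δ i < β i := lt_of_lt_of_le (by rw [← hδi]; exact lt_of_lt_of_le hi hβi) le_rfl
    -- there is k with β k < δ k since the sums agree
    have hk : ∃ k, β k < δ k := by
      by_contra h
      push_neg at h
      have : ∑ k, δ k < ∑ k, β k :=
        Finset.sum_lt_sum (fun k _ => h k) ⟨i, Finset.mem_univ i, hδβ⟩
      rw [hdeg δ hδB, hdeg β hβB] at this
      exact lt_irrefl d this
    obtain ⟨k, hkβδ⟩ := hk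
    have hki : k ≠ i := fun h => absurd hkβδ (by rw [h]; exact not_lt_of_ge hδβ.le)
    obtain ⟨γ, hγB, hγeq⟩ := hsep β hβB δ hδB i k hδβ hkβδ
    have hγi : γ i + 1 = β i := by
      have := congrFun hγeq i
      simpa [eVec, hki, Ne.symm hki] using this
    have hγj : β j ≤ γ j := by
      have := congrFun hγeq j
      simp only [Pi.add_apply, eVec] at this
      rcases eq_or_ne j k with h | h <;> subst_vars
      · simp [hki] at this; linarith
      · simp [h, Ne.symm hij] at this; exact this.ge
    have hγS : γ ∈ S := Finset.mem_filter.mpr ⟨hγB, lt_of_lt_of_le hβj hγj⟩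
    have := hβmin γ hγS
    linarith
end

section
/- Let B be a finite nonempty basis with the strong exchange property (SEP) of degree d in n variables, and let k be a positive integer. Then B^k = {b_1 + ⋯ + b_k : b_1, …, b_k ∈ B} is a basis with the strong exchange property of degree dk. -/
namespace SepPowerAux

variable {n d : ℕ}

lemma add_eVec_eq {γ α : Fin n → ℕ} {i j : Fin n} (h : γ + eVec i = α + eVec j)
    (l : Fin n) :
    γ l + (if l = i then 1 else 0) = α l + (if l = j then 1 else 0) := by
  have := congrFun h l
  simpa [eVec] using this

lemma exists_lt_of_lt (B : Finset (Fin n → ℕ)) (hdeg : ∀ α ∈ B, ∑ i, α i = d)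
    {Y Z : Fin n → ℕ} (hY : Y ∈ B) (hZ : Z ∈ B) {j : Fin n} (h : Z j < Y j) :
    ∃ l, Y l < Z l := by
  by_contra hcon
  push_neg at hcon
  have hlt : ∑ i, Z i < ∑ i, Y i :=
    Finset.sum_lt_sum (fun i _ => hcon i) ⟨j, Finset.mem_univ j, h⟩
  rw [hdeg Y hY, hdeg Z hZ] at hlt
  omega

lemma step_down (B : Finset (Fin n → ℕ)) (hB : IsSEP B d)
    {Y Z : Fin n → ℕ} (hY : Y ∈ B) (hZ : Z ∈ B) {j : Fin n} (h : Z j < Y j) :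
    ∃ Y' ∈ B, ∃ l, l ≠ j ∧ Y' + eVec j = Y + eVec l := by
  obtain ⟨l, hl⟩ := exists_lt_of_lt B hB.2.1 hY hZ h
  have hlj : l ≠ j := by rintro rfl; omega
  obtain ⟨γ, hγ, hγe⟩ := hB.2.2 Y hY Z hZ j l h hl
  exact ⟨γ, hγ, l, hlj, hγe⟩

lemma raise (B : Finset (Fin n → ℕ)) (hB : IsSEP B d) {β : Fin n → ℕ}
    (hβ : β ∈ B) {i j : Fin n} (hij : i ≠ j)
    (hz : ∃ Z ∈ B, Z j < β j) (hw : ∃ W ∈ B, β i < W i) :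
    ∃ γ ∈ B, γ + eVec j = β + eVec i := by
  obtain ⟨Z, hZ, hZj⟩ := hz
  obtain ⟨W, hW, hWi⟩ := hw
  have main : ∀ N (W : Fin n → ℕ), W ∈ B → β i < W i → W j ≤ N →
      ∃ γ ∈ B, γ + eVec j = β + eVec i := by
    intro N
    induction N with
    | zero =>
      intro W hW hWi hWj
      exact hB.2.2 β hβ W hW j i (by omega) hWi
    | succ N ih =>
      intro W hW hWi hWj
      rcases lt_or_ge (W j) (β j) with h | h
      · exact hB.2.2 β hβ W hW j i h hWi
      · have hZW : Z j < W j := lt_of_lt_of_le hZj h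
        obtain ⟨W', hW', l, hlj, hEq⟩ := step_down B hB hW hZ hZW
        have h1 := add_eVec_eq hEq j
        rw [if_pos rfl, if_neg (Ne.symm hlj)] at h1
        have h2 := add_eVec_eq hEq i
        rw [if_neg hij] at h2
        have hle : W i ≤ W' i := by
          by_cases hil : i = l
          · rw [if_pos hil] at h2; omega
          · rw [if_neg hil] at h2; omega
        exact ih W' hW' (lt_of_lt_of_le hWi hle) (by omega)
  exact main (W j) W hW hWi le_rfl

lemma mem_of_box (B : Finset (Fin n → ℕ)) (hB : IsSEP B d) (α : Fin n → ℕ)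
    (hα : ∑ i, α i = d)
    (hlo : ∀ l, ∃ z ∈ B, z l ≤ α l) (hhi : ∀ l, ∃ w ∈ B, α l ≤ w l) : α ∈ B := by
  obtain ⟨β₀, hβ₀⟩ := hB.1
  have main : ∀ N (β : Fin n → ℕ), β ∈ B →
      (∑ l, ((α l - β l) + (β l - α l))) ≤ N → α ∈ B := by
    intro N
    induction N with
    | zero =>
      intro β hβ hN
      have h0 : ∀ l ∈ Finset.univ, ((α l - β l) + (β l - α l)) = 0 :=
        (Finset.sum_eq_zero_iff).1 (Nat.le_zero.1 hN)
      have : α = β := funext fun l => by have := h0 l (Finset.mem_univ l); omega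
      rwa [this]
    | succ N ih =>
      intro β hβ hN
      by_cases hq : α = β
      · rwa [hq]
      · have hdegβ : ∑ l, β l = d := hB.2.1 β hβ
        obtain ⟨l₀, hl₀⟩ : ∃ l, α l ≠ β l := by
          by_contra h; push_neg at h; exact hq (funext h)
        have hexi : ∃ i, β i < α i := by
          by_contra h; push_neg at h
          have hlt : ∑ l, α l < ∑ l, β l :=
            Finset.sum_lt_sum (fun l _ => h l)
              ⟨l₀, Finset.mem_univ _, lt_of_le_of_ne (h l₀) hl₀⟩
          omega
        have hexj : ∃ j, α j < β j := by
          by_contra h; push_neg at h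
          have hlt : ∑ l, β l < ∑ l, α l :=
            Finset.sum_lt_sum (fun l _ => h l)
              ⟨l₀, Finset.mem_univ _, lt_of_le_of_ne (h l₀) (Ne.symm hl₀)⟩
          omega
        obtain ⟨i, hi⟩ := hexi
        obtain ⟨j, hj⟩ := hexj
        have hij : i ≠ j := by rintro rfl; omega
        obtain ⟨w, hwB, hwi⟩ := hhi i
        obtain ⟨z, hzB, hzj⟩ := hlo j
        obtain ⟨γ, hγB, hγe⟩ := raise B hB hβ hij ⟨z, hzB, by omega⟩ ⟨w, hwB, by omega⟩
        have hγi : γ i + 1 = β i + 1 + 1 ∨ True := Or.inr trivial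
        have hci := add_eVec_eq hγe i
        rw [if_neg hij, if_pos rfl] at hci
        have hcj := add_eVec_eq hγe j
        rw [if_pos rfl, if_neg (Ne.symm hij)] at hcj
        have key : ∀ l, ((α l - γ l) + (γ l - α l)) +
            ((if l = i then 1 else 0) + (if l = j then 1 else 0)) =
            (α l - β l) + (β l - α l) := by
          intro l
          by_cases h1 : l = i
          · subst h1; rw [if_pos rfl, if_neg hij]; omega
          · rw [if_neg h1]
            by_cases h2 : l = j
            · subst h2; rw [if_pos rfl]; omega
            · rw [if_neg h2]
              have hcl := add_eVec_eq hγe l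
              rw [if_neg h1, if_neg h2] at hcl
              omega
        have h1 := Finset.sum_congr rfl (fun l (_ : l ∈ Finset.univ) => key l)
        simp only [Finset.sum_add_distrib, Finset.sum_ite_eq', Finset.mem_univ,
          if_true] at h1
        simp only [Finset.sum_add_distrib] at hN
        apply ih γ hγB
        rw [Finset.sum_add_distrib]
        omega
  exact main _ β₀ hβ₀ le_rfl

lemma select : ∀ (s : Finset (Fin n)) (lo hi : Fin n → ℕ) (t : ℕ),
    (∀ l ∈ s, lo l ≤ hi l) → (∑ l ∈ s, lo l) ≤ t → t ≤ ∑ l ∈ s, hi l →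
    ∃ b : Fin n → ℕ, (∀ l ∈ s, lo l ≤ b l ∧ b l ≤ hi l) ∧ ∑ l ∈ s, b l = t := by
  intro s
  induction s using Finset.induction_on with
  | empty =>
    intro lo hi t _ h1 h2
    simp only [Finset.sum_empty] at h1 h2 ⊢
    exact ⟨fun _ => 0, fun l hl => absurd hl (Finset.notMem_empty l), by omega⟩
  | @insert a s ha ih =>
    intro lo hi t hlh h1 h2
    rw [Finset.sum_insert ha] at h1 h2
    have hS : (∑ l ∈ s, lo l) ≤ ∑ l ∈ s, hi l :=
      Finset.sum_le_sum (fun l hl => hlh l (Finset.mem_insert_of_mem hl))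
    have hlha : lo a ≤ hi a := hlh a (Finset.mem_insert_self a s)
    have hba2 : max (lo a) (t - ∑ l ∈ s, hi l) ≤ hi a := max_le hlha (by omega)
    have hba1 : lo a ≤ max (lo a) (t - ∑ l ∈ s, hi l) := le_max_left _ _
    have hbat : max (lo a) (t - ∑ l ∈ s, hi l) ≤ t := max_le (by omega) (by omega)
    have hlow : (∑ l ∈ s, lo l) ≤ t - max (lo a) (t - ∑ l ∈ s, hi l) := by
      rcases max_choice (lo a) (t - ∑ l ∈ s, hi l) with h | h <;> rw [h] <;> omega
    have hhigh : t - max (lo a) (t - ∑ l ∈ s, hi l) ≤ ∑ l ∈ s, hi l := by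
      rcases max_choice (lo a) (t - ∑ l ∈ s, hi l) with h | h <;> rw [h] <;> omega
    obtain ⟨b', hb'1, hb'2⟩ := ih lo hi (t - max (lo a) (t - ∑ l ∈ s, hi l))
      (fun l hl => hlh l (Finset.mem_insert_of_mem hl)) hlow hhigh
    refine ⟨Function.update b' a (max (lo a) (t - ∑ l ∈ s, hi l)), ?_, ?_⟩
    · intro l hl
      rcases Finset.mem_insert.mp hl with rfl | hl
      · rw [Function.update_self]; exact ⟨hba1, hba2⟩
      · have hla : l ≠ a := fun h => ha (h ▸ hl)
        rw [Function.update_of_ne hla]; exact hb'1 l hl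
    · rw [Finset.sum_insert ha, Function.update_self]
      have hcongr : (∑ l ∈ s, Function.update b' a (max (lo a) (t - ∑ l ∈ s, hi l)) l)
          = ∑ l ∈ s, b' l :=
        Finset.sum_congr rfl
          (fun l hl => Function.update_of_ne (fun h : l = a => ha (h ▸ hl)) _ _)
      rw [hcongr, hb'2]
      omega

lemma decompose (B : Finset (Fin n → ℕ)) (hB : IsSEP B d) (m M : Fin n → ℕ)
    (hm : ∀ l, ∃ z ∈ B, z l = m l) (hM : ∀ l, ∃ w ∈ B, w l = M l)
    (hmle : ∀ β ∈ B, ∀ l, m l ≤ β l) (hMle : ∀ β ∈ B, ∀ l, β l ≤ M l) :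
    ∀ k (α : Fin n → ℕ), (∑ l, α l) = d * (k + 1) →
      (∀ l, (k + 1) * m l ≤ α l) → (∀ l, α l ≤ (k + 1) * M l) →
      ∃ b : Fin (k + 1) → (Fin n → ℕ), (∀ t, b t ∈ B) ∧ α = ∑ t, b t := by
  intro k
  induction k with
  | zero =>
    intro α h1 h2 h3
    have hαB : α ∈ B := by
      apply mem_of_box B hB α (by simpa using h1)
      · intro l
        obtain ⟨z, hz, hzl⟩ := hm l
        have := h2 l
        exact ⟨z, hz, by omega⟩
      · intro l
        obtain ⟨w, hw, hwl⟩ := hM l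
        have := h3 l
        exact ⟨w, hw, by omega⟩
    exact ⟨fun _ => α, fun _ => hαB, by simp⟩
  | succ k ih =>
    intro α h1 h2 h3
    have hmM : ∀ l, m l ≤ M l := fun l => by
      obtain ⟨z, hz, hzl⟩ := hm l
      have := hMle z hz l
      omega
    have hlh : ∀ l, max (m l) (α l - (k + 1) * M l) ≤ min (M l) (α l - (k + 1) * m l) := by
      intro l
      have e1 : (k + 1 + 1) * (m l) = m l + (k + 1) * (m l) := by ring
      have e2 : (k + 1 + 1) * (M l) = M l + (k + 1) * (M l) := by ring
      have e3 : (k + 1) * (m l) ≤ (k + 1) * (M l) := Nat.mul_le_mul_left _ (hmM l)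
      have h2l := h2 l
      have h3l := h3 l
      have hmMl := hmM l
      omega
    have hper : ∀ l, (k + 1 + 1) * max (m l) (α l - (k + 1) * M l) ≤ α l := by
      intro l
      rcases le_total (α l - (k + 1) * M l) (m l) with h | h
      · rw [max_eq_left h]; exact h2 l
      · rw [max_eq_right h]
        rcases le_total (α l) ((k + 1) * M l) with h5 | h5
        · rw [Nat.sub_eq_zero_of_le h5]; simp
        · have hsM : α l - (k + 1) * M l ≤ M l := by
            have e2 : (k + 1 + 1) * (M l) = M l + (k + 1) * (M l) := by ring
            have := h3 l
            omega
          calc (k + 1 + 1) * (α l - (k + 1) * M l)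
              = (k + 1) * (α l - (k + 1) * M l) + (α l - (k + 1) * M l) := by ring
            _ ≤ (k + 1) * M l + (α l - (k + 1) * M l) := by
                have := Nat.mul_le_mul_left (k + 1) hsM
                omega
            _ ≤ α l := by omega
    have hper2 : ∀ l, α l ≤ (k + 1 + 1) * min (M l) (α l - (k + 1) * m l) := by
      intro l
      rcases le_total (M l) (α l - (k + 1) * m l) with h | h
      · rw [min_eq_left h]; exact h3 l
      · rw [min_eq_right h]
        have e1 : (k + 1 + 1) * (m l) = m l + (k + 1) * (m l) := by ring
        have h2l := h2 l
        have hms : (k + 1) * (m l) ≤ (k + 1) * (α l - (k + 1) * m l) :=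
          Nat.mul_le_mul_left _ (by omega)
        have e4 : (k + 1 + 1) * (α l - (k + 1) * m l)
            = (k + 1) * (α l - (k + 1) * m l) + (α l - (k + 1) * m l) := by ring
        omega
    have hlosum : (∑ l, max (m l) (α l - (k + 1) * M l)) ≤ d := by
      have hmul : (k + 1 + 1) * (∑ l, max (m l) (α l - (k + 1) * M l)) ≤ (k + 1 + 1) * d := by
        calc (k + 1 + 1) * (∑ l, max (m l) (α l - (k + 1) * M l))
            = ∑ l, (k + 1 + 1) * max (m l) (α l - (k + 1) * M l) := Finset.mul_sum _ _ _
          _ ≤ ∑ l, α l := Finset.sum_le_sum (fun l _ => hper l)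
          _ = d * (k + 1 + 1) := h1
          _ = (k + 1 + 1) * d := Nat.mul_comm _ _
      exact Nat.le_of_mul_le_mul_left hmul (by omega)
    have hhisum : d ≤ ∑ l, min (M l) (α l - (k + 1) * m l) := by
      have hmul : (k + 1 + 1) * d ≤ (k + 1 + 1) * ∑ l, min (M l) (α l - (k + 1) * m l) := by
        calc (k + 1 + 1) * d = d * (k + 1 + 1) := Nat.mul_comm _ _
          _ = ∑ l, α l := h1.symm
          _ ≤ ∑ l, (k + 1 + 1) * min (M l) (α l - (k + 1) * m l) :=
              Finset.sum_le_sum (fun l _ => hper2 l)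
          _ = (k + 1 + 1) * ∑ l, min (M l) (α l - (k + 1) * m l) := (Finset.mul_sum _ _ _).symm
      exact Nat.le_of_mul_le_mul_left hmul (by omega)
    obtain ⟨b, hb1, hb2⟩ := select Finset.univ
      (fun l => max (m l) (α l - (k + 1) * M l))
      (fun l => min (M l) (α l - (k + 1) * m l)) d
      (fun l _ => hlh l) hlosum hhisum
    have hbB : b ∈ B := by
      apply mem_of_box B hB b hb2
      · intro l
        obtain ⟨z, hz, hzl⟩ := hm l
        have hbl := (hb1 l (Finset.mem_univ l)).1
        have : m l ≤ max (m l) (α l - (k + 1) * M l) := le_max_left _ _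
        exact ⟨z, hz, by omega⟩
      · intro l
        obtain ⟨w, hw, hwl⟩ := hM l
        have hbl := (hb1 l (Finset.mem_univ l)).2
        have : min (M l) (α l - (k + 1) * m l) ≤ M l := min_le_left _ _
        exact ⟨w, hw, by omega⟩
    have hble : ∀ l, b l ≤ α l := by
      intro l
      have hbl := (hb1 l (Finset.mem_univ l)).2
      have h5 : min (M l) (α l - (k + 1) * m l) ≤ α l - (k + 1) * m l := min_le_right _ _
      omega
    have hcdeg : (∑ l, (α l - b l)) = d * (k + 1) := by
      have hsplit : (∑ l, b l) + (∑ l, (α l - b l)) = ∑ l, α l := by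
        rw [← Finset.sum_add_distrib]
        exact Finset.sum_congr rfl (fun l _ => by have := hble l; omega)
      have e : d * (k + 1 + 1) = d * (k + 1) + d := by ring
      omega
    have hclo : ∀ l, (k + 1) * m l ≤ α l - b l := by
      intro l
      have hbl := (hb1 l (Finset.mem_univ l)).2
      have h5 : min (M l) (α l - (k + 1) * m l) ≤ α l - (k + 1) * m l := min_le_right _ _
      have e1 : (k + 1 + 1) * (m l) = m l + (k + 1) * (m l) := by ring
      have h2l := h2 l
      omega
    have hchi : ∀ l, α l - b l ≤ (k + 1) * M l := by
      intro l
      have hbl := (hb1 l (Finset.mem_univ l)).1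
      have h5 : α l - (k + 1) * M l ≤ max (m l) (α l - (k + 1) * M l) := le_max_right _ _
      omega
    obtain ⟨b', hb'1, hb'2⟩ := ih (fun l => α l - b l) hcdeg hclo hchi
    refine ⟨Fin.cons b b', ?_, ?_⟩
    · intro t
      refine Fin.cases ?_ ?_ t
      · simpa using hbB
      · intro t'
        simpa using hb'1 t'
    · rw [Fin.sum_univ_succ]
      simp only [Fin.cons_zero, Fin.cons_succ]
      rw [← hb'2]
      funext l
      show α l = b l + (α l - b l)
      have := hble l
      omega

end SepPowerAux

/-- If `B` has the SEP of degree `d`, then the `k`-fold sumset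
`B^k = {b_1 + ⋯ + b_k : b_t ∈ B}` has the SEP of degree `d * k`. -/
theorem sep_power {n d k : ℕ} (hk : 0 < k) (B : Finset (Fin n → ℕ))
    (hB : IsSEP B d) (Bk : Finset (Fin n → ℕ))
    (hBk : ∀ α : Fin n → ℕ,
      α ∈ Bk ↔ ∃ b : Fin k → (Fin n → ℕ), (∀ t, b t ∈ B) ∧ α = ∑ t, b t) :
    IsSEP Bk (d * k) := by
  open SepPowerAux in
  obtain ⟨k', rfl⟩ : ∃ k', k = k' + 1 := ⟨k - 1, by omega⟩
  clear hk
  have hne := hB.1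
  obtain ⟨m, hm, hmle⟩ : ∃ m : Fin n → ℕ, (∀ l, ∃ z ∈ B, z l = m l) ∧
      (∀ β ∈ B, ∀ l, m l ≤ β l) := by
    refine ⟨fun l => B.inf' hne (fun β => β l), fun l => ?_, fun β hβ l => ?_⟩
    · obtain ⟨z, hz, he⟩ := Finset.exists_mem_eq_inf' hne (fun β => β l)
      exact ⟨z, hz, he.symm⟩
    · exact Finset.inf'_le (fun β => β l) hβ
  obtain ⟨M, hM, hMle⟩ : ∃ M : Fin n → ℕ, (∀ l, ∃ w ∈ B, w l = M l) ∧
      (∀ β ∈ B, ∀ l, β l ≤ M l) := by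
    refine ⟨fun l => B.sup' hne (fun β => β l), fun l => ?_, fun β hβ l => ?_⟩
    · obtain ⟨w, hw, he⟩ := Finset.exists_mem_eq_sup' hne (fun β => β l)
      exact ⟨w, hw, he.symm⟩
    · exact Finset.le_sup' (fun β => β l) hβ
  have happly : ∀ (b : Fin (k' + 1) → (Fin n → ℕ)) (l : Fin n),
      (∑ t, b t) l = ∑ t, b t l := by
    intro b l
    simp [Finset.sum_apply]
  have hmemlo : ∀ α ∈ Bk, ∀ l, (k' + 1) * m l ≤ α l := by
    intro α hα l
    obtain ⟨b, hb, rfl⟩ := (hBk α).1 hα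
    rw [happly]
    calc (k' + 1) * m l = ∑ _t : Fin (k' + 1), m l := by
          simp [Finset.sum_const, mul_comm]
      _ ≤ ∑ t, b t l := Finset.sum_le_sum (fun t _ => hmle _ (hb t) l)
  have hmemhi : ∀ α ∈ Bk, ∀ l, α l ≤ (k' + 1) * M l := by
    intro α hα l
    obtain ⟨b, hb, rfl⟩ := (hBk α).1 hα
    rw [happly]
    calc ∑ t, b t l ≤ ∑ _t : Fin (k' + 1), M l :=
          Finset.sum_le_sum (fun t _ => hMle _ (hb t) l)
      _ = (k' + 1) * M l := by simp [Finset.sum_const, mul_comm]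
  have hdegBk : ∀ α ∈ Bk, ∑ l, α l = d * (k' + 1) := by
    intro α hα
    obtain ⟨b, hb, rfl⟩ := (hBk α).1 hα
    calc ∑ l, (∑ t, b t) l = ∑ l, ∑ t, b t l := by
          exact Finset.sum_congr rfl (fun l _ => happly b l)
      _ = ∑ t, ∑ l, b t l := Finset.sum_comm
      _ = ∑ _t : Fin (k' + 1), d := Finset.sum_congr rfl (fun t _ => hB.2.1 _ (hb t))
      _ = (k' + 1) * d := by simp [Finset.sum_const, mul_comm]
      _ = d * (k' + 1) := Nat.mul_comm _ _
  refine ⟨?_, hdegBk, ?_⟩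
  · obtain ⟨β₀, hβ₀⟩ := hB.1
    exact ⟨_, (hBk _).2 ⟨fun _ => β₀, fun _ => hβ₀, rfl⟩⟩
  · intro α hα β hβ i j hi hj
    have hij : i ≠ j := by rintro rfl; omega
    have hαi : 1 ≤ α i := by omega
    refine ⟨fun l => if l = i then α l - 1 else if l = j then α l + 1 else α l, ?_, ?_⟩
    · apply (hBk _).2
      apply SepPowerAux.decompose B hB m M hm hM hmle hMle k'
      · -- degree
        have hd := hdegBk α hα
        have hsplit : ∀ l ∈ Finset.univ,
            (if l = i then α l - 1 else if l = j then α l + 1 else α l) +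
              ((if l = i then 1 else 0)) =
            α l + (if l = j then 1 else 0) := by
          intro l _
          by_cases h1 : l = i
          · subst h1; rw [if_pos rfl, if_pos rfl, if_neg hij]; omega
          · rw [if_neg h1, if_neg h1]
            by_cases h2 : l = j
            · subst h2; simp
            · rw [if_neg h2, if_neg h2]
        have hsumeq := Finset.sum_congr rfl hsplit
        rw [Finset.sum_add_distrib, Finset.sum_add_distrib] at hsumeq
        simp only [Finset.sum_ite_eq', Finset.mem_univ, if_pos] at hsumeq
        omega
      · intro l
        have hbl := hmemlo β hβ l
        have hal := hmemlo α hα l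
        by_cases h1 : l = i
        · subst h1; rw [if_pos rfl]; omega
        · rw [if_neg h1]
          by_cases h2 : l = j
          · subst h2; rw [if_pos rfl]; omega
          · rw [if_neg h2]; omega
      · intro l
        have hbl := hmemhi β hβ l
        have hal := hmemhi α hα l
        by_cases h1 : l = i
        · subst h1; rw [if_pos rfl]; omega
        · rw [if_neg h1]
          by_cases h2 : l = j
          · subst h2; rw [if_pos rfl]; omega
          · rw [if_neg h2]; omega
    · funext l
      show (if l = i then α l - 1 else if l = j then α l + 1 else α l) + eVec i l
          = α l + eVec j l
      simp only [eVec]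
      by_cases h1 : l = i
      · subst h1; rw [if_pos rfl, if_pos rfl, if_neg hij]; omega
      · rw [if_neg h1, if_neg h1]
        by_cases h2 : l = j
        · subst h2; simp
        · rw [if_neg h2, if_neg h2]
end

section
/- Let k ≥ 1 and let r : Fin n → ℕ be an exponent vector with r(i) < k for every i and with k dividing ∑_i r(i). Then there exist exponent vectors M_1, …, M_k : Fin n → ℕ, each with all entries in {0,1} (squarefree) and each of the same degree ∑_i M_t(i) = (∑_i r(i))/k, such that M_1 + ⋯ + M_k = r. -/
open Finset

private lemma filter_mod_card_range (k d t : ℕ) (hk : 0 < k) (ht : t < k) :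
    ((range (k * d)).filter (fun p => p % k = t)).card = d := by
  have h : (range (k * d)).filter (fun p => p % k = t)
      = (range d).image (fun q => q * k + t) := by
    ext p
    simp only [mem_filter, mem_range, mem_image]
    constructor
    · rintro ⟨hlt, hmod⟩
      refine ⟨p / k, Nat.div_lt_of_lt_mul hlt, ?_⟩
      rw [← hmod, Nat.div_add_mod']
    · rintro ⟨q, hq, rfl⟩
      refine ⟨?_, ?_⟩
      · calc q * k + t < q * k + k := by omega
          _ = (q + 1) * k := by ring
          _ ≤ d * k := Nat.mul_le_mul_right _ hq
          _ = k * d := Nat.mul_comm _ _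
      · simp [Nat.add_mod, Nat.mul_mod_left, Nat.mod_eq_of_lt ht]
  rw [h, card_image_of_injective _ ?_, card_range]
  intro a b hab
  simp only at hab
  exact Nat.eq_of_mul_eq_mul_right hk (by omega)

private lemma sum_card_filter_Ico (f : ℕ → ℕ) (pred : ℕ → Prop) [DecidablePred pred] :
    ∀ m, ∑ j ∈ range m,
        ((Ico (∑ l ∈ range j, f l) (∑ l ∈ range (j+1), f l)).filter pred).card
      = ((range (∑ l ∈ range m, f l)).filter pred).card := by
  intro m
  induction m with
  | zero => simp
  | succ m ih =>
      rw [sum_range_succ, ih]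
      have hsplit : range (∑ l ∈ range (m+1), f l)
          = range (∑ l ∈ range m, f l) ∪ Ico (∑ l ∈ range m, f l) (∑ l ∈ range (m+1), f l) := by
        have hle : ∑ l ∈ range m, f l ≤ ∑ l ∈ range (m+1), f l := by
          rw [sum_range_succ]; omega
        ext x
        simp only [mem_range, mem_union, mem_Ico]
        omega
      rw [hsplit, filter_union, card_union_of_disjoint]
      apply disjoint_filter_filter
      rw [range_eq_Ico]
      exact Finset.Ico_disjoint_Ico_consecutive _ _ _

/-- Any exponent vector `r` with all entries `< k` and degree divisible by `k` factors
as a sum of `k` squarefree exponent vectors, all of the same degree `(∑ i, r i) / k`. -/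
theorem squarefree_equidegree_factorization {n k : ℕ} (hk : 1 ≤ k)
    (r : Fin n → ℕ) (hr : ∀ i, r i < k) (hdvd : k ∣ ∑ i, r i) :
    ∃ M : Fin k → (Fin n → ℕ),
      (∀ t, ∀ i, M t i ≤ 1) ∧
      (∀ t, ∑ i, M t i = (∑ i, r i) / k) ∧
      (∑ t, M t) = r := by
  have hk0 : 0 < k := hk
  obtain ⟨d, hd⟩ := hdvd
  obtain ⟨r', hr'def⟩ : ∃ r' : ℕ → ℕ, ∀ j, r' j = if h : j < n then r ⟨j, h⟩ else 0 :=
    ⟨_, fun _ => rfl⟩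
  have hr'eq : ∀ i : Fin n, r' i.val = r i := by
    intro i; rw [hr'def]; simp [i.isLt]
  obtain ⟨P, hPdef⟩ : ∃ P : ℕ → ℕ, ∀ m, P m = ∑ l ∈ range m, r' l := ⟨_, fun _ => rfl⟩
  have hPn : P n = ∑ i, r i := by
    rw [hPdef n, ← Fin.sum_univ_eq_sum_range (fun j => r' j) n]
    exact Finset.sum_congr rfl fun i _ => hr'eq i
  refine ⟨fun t i => ((Ico (P i.val) (P i.val + r i)).filter (fun p => p % k = t.val)).card,
    ?_, ?_, ?_⟩
  · -- squarefree
    intro t i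
    apply Finset.card_le_one.2
    intro a ha b hb
    simp only [mem_filter, mem_Ico] at ha hb
    rcases le_total a b with hab | hab
    · have hmod : a ≡ b [MOD k] := by
        show a % k = b % k; omega
      have hdvd' := (Nat.modEq_iff_dvd' hab).mp hmod
      have h0 : b - a = 0 := Nat.eq_zero_of_dvd_of_lt hdvd' (by have := hr i; omega)
      omega
    · have hmod : b ≡ a [MOD k] := by
        show b % k = a % k; omega
      have hdvd' := (Nat.modEq_iff_dvd' hab).mp hmod
      have h0 : a - b = 0 := Nat.eq_zero_of_dvd_of_lt hdvd' (by have := hr i; omega)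
      omega
  · -- equal degrees
    intro t
    have h1 : ∀ i : Fin n,
        ((Ico (P i.val) (P i.val + r i)).filter (fun p => p % k = t.val)).card
        = ((Ico (P i.val) (P (i.val + 1))).filter (fun p => p % k = t.val)).card := by
      intro i
      congr 2
      rw [hPdef, hPdef, sum_range_succ, hr'eq]
    calc ∑ i : Fin n, ((Ico (P i.val) (P i.val + r i)).filter (fun p => p % k = t.val)).card
        = ∑ i : Fin n, ((Ico (P i.val) (P (i.val + 1))).filter (fun p => p % k = t.val)).card :=
          Finset.sum_congr rfl fun i _ => h1 i
      _ = ∑ j ∈ range n, ((Ico (P j) (P (j + 1))).filter (fun p => p % k = t.val)).card :=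
          Fin.sum_univ_eq_sum_range (fun j => ((Ico (P j) (P (j + 1))).filter (fun p => p % k = t.val)).card) n
      _ = ((range (P n)).filter (fun p => p % k = t.val)).card := by
          simp only [hPdef]
          exact sum_card_filter_Ico r' _ n
      _ = d := by
          rw [hPn, hd]
          exact filter_mod_card_range k d t.val hk0 t.isLt
      _ = (∑ i, r i) / k := by rw [hd, Nat.mul_div_cancel_left _ hk0]
  · -- sum equals r
    funext i
    rw [Finset.sum_apply]
    have hcard := Finset.card_eq_sum_card_fiberwise
      (s := Ico (P i.val) (P i.val + r i)) (t := (univ : Finset (Fin k)))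
      (f := fun p => (⟨p % k, Nat.mod_lt p hk0⟩ : Fin k)) (fun x _ => mem_univ _)
    rw [Nat.card_Ico] at hcard
    have heq : ∀ t : Fin k,
        ((Ico (P i.val) (P i.val + r i)).filter
          (fun p => (⟨p % k, Nat.mod_lt p hk0⟩ : Fin k) = t)).card
        = ((Ico (P i.val) (P i.val + r i)).filter (fun p => p % k = t.val)).card := by
      intro t
      congr 1
      apply Finset.filter_congr
      intro x _
      simp [Fin.ext_iff]
    calc ∑ t : Fin k, ((Ico (P i.val) (P i.val + r i)).filter (fun p => p % k = t.val)).card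
        = ∑ t : Fin k, ((Ico (P i.val) (P i.val + r i)).filter
            (fun p => (⟨p % k, Nat.mod_lt p hk0⟩ : Fin k) = t)).card :=
          Finset.sum_congr rfl fun t _ => (heq t).symm
      _ = P i.val + r i - P i.val := hcard.symm
      _ = r i := by omega
end

section
/- In the tuple presentation of a product of SEP bases B_1, …, B_s over a field K, let F = y_{v_1}⋯y_{v_d} be a monomial in K[Y_V] and let F' = y_{v'_1}⋯y_{v'_d} be the monomial obtained from F by permuting the entries in one column: there is a column index c and a permutation σ of {1,…,d} with v'_i(c) = v_{σ(i)}(c) and v'_i(k) = v_i(k) for all k ≠ c. Then F − F' lies in E ∩ P. -/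
open MvPolynomial

/-- The total exponent vector `|v| = v 1 + ⋯ + v s` of a tuple `v ∈ V = B_1 × ⋯ × B_s`. -/
def tot {n : ℕ} {ι : Type*} [Fintype ι] (Bj : ι → Finset (Fin n → ℕ))
    (v : (j : ι) → ↥(Bj j)) : Fin n → ℕ :=
  ∑ j, ((v j : Fin n → ℕ))

/-- The tuple presentation `φ : K[Y_V] → K[x_1,…,x_n]`, `y_v ↦ x^{|v|}`. -/
noncomputable def phiT {n : ℕ} {ι : Type*} [Fintype ι] (Bj : ι → Finset (Fin n → ℕ))
    (K : Type*) [Field K] :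
    MvPolynomial ((j : ι) → ↥(Bj j)) K →ₐ[K] MvPolynomial (Fin n) K :=
  aeval fun v => ∏ i, (X i : MvPolynomial (Fin n) K) ^ tot Bj v i

/-- The ideal `L` generated by the degree-one binomials `y_v − y_w` with `|v| = |w|`. -/
noncomputable def idealL {n : ℕ} {ι : Type*} [Fintype ι] (Bj : ι → Finset (Fin n → ℕ))
    (K : Type*) [Field K] : Ideal (MvPolynomial ((j : ι) → ↥(Bj j)) K) :=
  Ideal.span { p | ∃ v w : (j : ι) → ↥(Bj j), tot Bj v = tot Bj w ∧ p = X v - X w }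

/-- The ideal `E` generated by the symmetric exchange relations. -/
noncomputable def idealE {n : ℕ} {ι : Type*} [Fintype ι] (Bj : ι → Finset (Fin n → ℕ))
    (K : Type*) [Field K] : Ideal (MvPolynomial ((j : ι) → ↥(Bj j)) K) :=
  Ideal.span { p | ∃ (r s t u : (j : ι) → ↥(Bj j)) (i₁ i₂ : Fin n),
    tot Bj s i₁ < tot Bj r i₁ ∧ tot Bj r i₂ < tot Bj s i₂ ∧
    tot Bj t + eVec i₁ = tot Bj r + eVec i₂ ∧
    tot Bj u + eVec i₂ = tot Bj s + eVec i₁ ∧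
    p = X r * X s - X t * X u }

/-- The ideal `P` generated by the binomials in `ker φ` whose associated matrices of
tuples differ in at most one column. -/
noncomputable def idealP {n : ℕ} {ι : Type*} [Fintype ι] (Bj : ι → Finset (Fin n → ℕ))
    (K : Type*) [Field K] : Ideal (MvPolynomial ((j : ι) → ↥(Bj j)) K) :=
  Ideal.span { p | ∃ d : ℕ, 1 ≤ d ∧ ∃ v w : Fin d → ((j : ι) → ↥(Bj j)),
    p = (∏ i, X (v i)) - (∏ i, X (w i)) ∧ p ∈ RingHom.ker (phiT Bj K) ∧
    ∃ c : ι, ∀ i : Fin d, ∀ k : ι, k ≠ c → v i k = w i k }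

namespace RC

variable {n : ℕ}


lemma eVec_apply (i j : Fin n) : eVec i j = if j = i then 1 else 0 := rfl

/-- Extract the pointwise description of the SEP exchange element. -/
lemma sep_exchange {B : Finset (Fin n → ℕ)} {d : ℕ} (hB : IsSEP B d)
    {α β : Fin n → ℕ} (hα : α ∈ B) (hβ : β ∈ B) {i j : Fin n}
    (h1 : β i < α i) (h2 : α j < β j) :
    ∃ γ ∈ B, ∀ x, γ x + eVec i x = α x + eVec j x := by
  obtain ⟨γ, hγ, heq⟩ := hB.2.2 α hα β hβ i j h1 h2
  exact ⟨γ, hγ, fun x => congrFun heq x⟩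

/-- The interval lemma: any point of the coordinate box spanned by two elements of a
SEP basis, with the right degree, belongs to the basis. -/
lemma interval_mem {B : Finset (Fin n → ℕ)} {d : ℕ} (hB : IsSEP B d)
    {b : Fin n → ℕ} (hb : b ∈ B) (ξ : Fin n → ℕ)
    (hsum : ∑ i, ξ i = d) :
    ∀ (N : ℕ) (a : Fin n → ℕ), a ∈ B →
      (∀ i, min (a i) (b i) ≤ ξ i) → (∀ i, ξ i ≤ max (a i) (b i)) →
      (∑ i, ((a i - ξ i) + (ξ i - a i))) ≤ N → ξ ∈ B := by
  intro N
  induction N using Nat.strong_induction_on with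
  | _ N IH =>
    intro a ha hlo hhi hmeas
    by_cases hfin : ∀ i, ξ i = a i
    · have : ξ = a := funext hfin
      rw [this]; exact ha
    · push_neg at hfin
      obtain ⟨i₀, hi₀⟩ := hfin
      -- there is a coordinate where ξ < a and one where ξ > a
      have hsa : ∑ i, a i = d := hB.2.1 a ha
      have hex_lt : ∃ i, ξ i < a i := by
        by_contra hcon
        push_neg at hcon
        -- ξ ≥ a everywhere, hence sums equal forces equality
        have : ∑ i, a i < ∑ i, ξ i := by
          apply Finset.sum_lt_sum (fun i _ => hcon i)
          exact ⟨i₀, Finset.mem_univ _, lt_of_le_of_ne (hcon i₀) (Ne.symm hi₀)⟩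
        omega
      have hex_gt : ∃ j, a j < ξ j := by
        by_contra hcon
        push_neg at hcon
        have hne : ∃ i, ξ i < a i := hex_lt
        have : ∑ i, ξ i < ∑ i, a i := by
          obtain ⟨i₁, h1⟩ := hne
          exact Finset.sum_lt_sum (fun i _ => hcon i) ⟨i₁, Finset.mem_univ _, h1⟩
        omega
      obtain ⟨i, hi⟩ := hex_lt
      obtain ⟨j, hj⟩ := hex_gt
      have hij : i ≠ j := by
        intro h; rw [h] at hi; omega
      -- b i ≤ ξ i < a i  and  a j < ξ j ≤ b j
      have hbi : b i < a i := by
        have := hlo i; rcases min_cases (a i) (b i) with ⟨h,_⟩|⟨h,_⟩ <;> omega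
      have hbj : a j < b j := by
        have := hhi j; rcases max_cases (a j) (b j) with ⟨h,_⟩|⟨h,_⟩ <;> omega
      obtain ⟨γ, hγB, hγ⟩ := sep_exchange hB ha hb hbi hbj
      -- pointwise description of γ
      have hγi : γ i + 1 = a i := by have := hγ i; simp [eVec, hij] at this; omega
      have hγj : γ j = a j + 1 := by
        have := hγ j; simp [eVec, hij.symm, (Ne.symm hij)] at this; omega
      have hγo : ∀ x, x ≠ i → x ≠ j → γ x = a x := by
        intro x hxi hxj; have := hγ x; simp [eVec, hxi, hxj] at this; omega
      -- new measure strictly smaller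
      have hlt : (∑ x, ((γ x - ξ x) + (ξ x - γ x))) < ∑ x, ((a x - ξ x) + (ξ x - a x)) := by
        apply Finset.sum_lt_sum
        · intro x _
          by_cases hxi : x = i
          · rw [hxi]; omega
          by_cases hxj : x = j
          · rw [hxj]; omega
          · rw [hγo x hxi hxj]
        · exact ⟨i, Finset.mem_univ _, by omega⟩
      apply IH (∑ x, ((γ x - ξ x) + (ξ x - γ x))) (by omega) γ hγB
      · intro x
        by_cases hxi : x = i
        · rw [hxi]
          have e1 : min (a i) (b i) = b i := min_eq_right hbi.le
          exact le_trans (min_le_right _ _) (e1 ▸ hlo i)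
        by_cases hxj : x = j
        · rw [hxj]
          exact le_trans (min_le_left _ _) (by omega)
        · rw [hγo x hxi hxj]; exact hlo x
      · intro x
        by_cases hxi : x = i
        · rw [hxi]
          exact le_trans (by omega) (le_max_left (γ i) (b i))
        by_cases hxj : x = j
        · rw [hxj]
          have e2 : max (a j) (b j) = b j := max_eq_right hbj.le
          exact le_trans (e2 ▸ hhi j) (le_max_right _ _)
        · rw [hγo x hxi hxj]; exact hhi x
      · exact le_refl _



variable {s : ℕ} {dg : Fin s → ℕ} {Bj : Fin s → Finset (Fin n → ℕ)}

lemma tot_apply (v : (j : Fin s) → ↥(Bj j)) (x : Fin n) :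
    tot Bj v x = ∑ j, (v j : Fin n → ℕ) x := by
  simp [tot]

lemma coe_update_apply (v : (j : Fin s) → ↥(Bj j)) (c : Fin s) (ξ : ↥(Bj c))
    (j : Fin s) (x : Fin n) :
    ((Function.update v c ξ j : ↥(Bj j)) : Fin n → ℕ) x
      = if j = c then (ξ : Fin n → ℕ) x else (v j : Fin n → ℕ) x := by
  by_cases h : j = c
  · subst h; simp
  · rw [Function.update_of_ne h, if_neg h]

lemma tot_update (v : (j : Fin s) → ↥(Bj j)) (c : Fin s) (ξ : ↥(Bj c)) (x : Fin n) :
    tot Bj (Function.update v c ξ) x + (v c : Fin n → ℕ) x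
      = tot Bj v x + (ξ : Fin n → ℕ) x := by
  rw [tot_apply, tot_apply]
  rw [← Finset.sum_erase_add _ _ (Finset.mem_univ c),
      ← Finset.sum_erase_add _ (fun j => (v j : Fin n → ℕ) x) (Finset.mem_univ c)]
  have h1 : ∑ j ∈ Finset.univ.erase c, ((Function.update v c ξ j : ↥(Bj j)) : Fin n → ℕ) x
      = ∑ j ∈ Finset.univ.erase c, (v j : Fin n → ℕ) x := by
    apply Finset.sum_congr rfl
    intro j hj
    rw [coe_update_apply, if_neg (Finset.ne_of_mem_erase hj)]
  have h2 : ((Function.update v c ξ c : ↥(Bj c)) : Fin n → ℕ) x = (ξ : Fin n → ℕ) x := by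
    rw [coe_update_apply, if_pos rfl]
  omega

lemma col_degree (hBj : ∀ j, IsSEP (Bj j) (dg j)) (v : (j : Fin s) → ↥(Bj j)) (k : Fin s) :
    ∑ x, (v k : Fin n → ℕ) x = dg k :=
  (hBj k).2.1 _ (v k).2

/-- Paths in the exchange structure between two tuples. -/
def pvalid (v w : (j : Fin s) → ↥(Bj j)) : Fin n → List (Fin s × Fin n) → Prop
  | _, [] => True
  | β, e :: rest =>
      ((w e.1 : Fin n → ℕ) β < (v e.1 : Fin n → ℕ) β ∧
       (v e.1 : Fin n → ℕ) e.2 < (w e.1 : Fin n → ℕ) e.2)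
      ∧ pvalid v w e.2 rest

def endpos : Fin n → List (Fin s × Fin n) → Fin n
  | β, [] => β
  | _, e :: rest => endpos e.2 rest

lemma pvalid_append_elim (v w : (j : Fin s) → ↥(Bj j)) :
    ∀ (l1 : List (Fin s × Fin n)) (e : Fin s × Fin n) (l2 : List (Fin s × Fin n)) (β : Fin n),
    pvalid v w β (l1 ++ e :: l2) →
      (v e.1 : Fin n → ℕ) e.2 < (w e.1 : Fin n → ℕ) e.2 ∧ pvalid v w e.2 l2 ∧
      endpos β (l1 ++ e :: l2) = endpos e.2 l2 := by
  intro l1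
  induction l1 with
  | nil =>
    intro e l2 β h
    exact ⟨h.1.2, h.2, rfl⟩
  | cons f t ih =>
    intro e l2 β h
    have := ih e l2 f.2 h.2
    exact ⟨this.1, this.2.1, this.2.2⟩

lemma pvalid_update (v w : (j : Fin s) → ↥(Bj j)) (k₀ : Fin s) (ν ω : ↥(Bj k₀)) :
    ∀ (l : List (Fin s × Fin n)) (β : Fin n), (∀ e ∈ l, e.1 ≠ k₀) →
      pvalid v w β l → pvalid (Function.update v k₀ ν) (Function.update w k₀ ω) β l := by
  intro l
  induction l with
  | nil => intro β _ _; trivial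
  | cons e rest ih =>
    intro β hfr h
    have hek : e.1 ≠ k₀ := hfr e List.mem_cons_self
    refine ⟨?_, ih e.2 (fun f hf => hfr f (List.mem_cons_of_mem _ hf)) h.2⟩
    have h1 : ((Function.update v k₀ ν e.1 : ↥(Bj e.1)) : Fin n → ℕ) = (v e.1 : Fin n → ℕ) := by
      rw [Function.update_of_ne hek]
    have h2 : ((Function.update w k₀ ω e.1 : ↥(Bj e.1)) : Fin n → ℕ) = (w e.1 : Fin n → ℕ) := by
      rw [Function.update_of_ne hek]
    rw [h1, h2]
    exact h.1

lemma construct_aux (hBj : ∀ j, IsSEP (Bj j) (dg j)) :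
    ∀ (N : ℕ) (l : List (Fin s × Fin n)), l.length ≤ N →
      ∀ (v w : (j : Fin s) → ↥(Bj j)) (β : Fin n), pvalid v w β l →
      ∃ v' w' : (j : Fin s) → ↥(Bj j),
        (∀ x, tot Bj v' x + eVec β x = tot Bj v x + eVec (endpos β l) x) ∧
        (∀ x, tot Bj w' x + eVec (endpos β l) x = tot Bj w x + eVec β x) := by
  intro N
  induction N using Nat.strong_induction_on with
  | _ N IH =>
    intro l hlen v w β hval
    match l, hval with
    | [], _ => exact ⟨v, w, fun x => rfl, fun x => rfl⟩
    | (k₀, γ) :: rest, hval =>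
      have hcond := hval.1
      have hrest := hval.2
      simp only at hcond
      by_cases hrep : ∃ e ∈ rest, e.1 = k₀
      · -- shortcut
        obtain ⟨e, he, hek⟩ := hrep
        obtain ⟨r1, r2, hsplit⟩ := List.append_of_mem he
        rw [hsplit] at hrest
        obtain ⟨hse, hpv2, hend2⟩ := pvalid_append_elim v w r1 e r2 γ hrest
        have hval' : pvalid v w β ((k₀, e.2) :: r2) := by
          refine ⟨⟨hcond.1, ?_⟩, hpv2⟩
          rw [← hek]; exact hse
        have hlen' : ((k₀, e.2) :: r2).length < N := by
          have h2 : rest.length + 1 ≤ N := by simpa using hlen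
          have h1 : rest.length = r1.length + (r2.length + 1) := by
            simp [hsplit]
          simp only [List.length_cons]
          omega
        obtain ⟨v', w', hv', hw'⟩ :=
          IH (((k₀, e.2) :: r2).length) hlen' _ (le_refl _) v w β hval'
        refine ⟨v', w', ?_, ?_⟩
        · intro x
          have := hv' x
          have hendeq : endpos β ((k₀, e.2) :: r2) = endpos β ((k₀, γ) :: rest) := by
            show endpos e.2 r2 = endpos γ rest
            rw [hsplit]
            exact (pvalid_append_elim v w r1 e r2 γ (hsplit ▸ hval.2)).2.2.symm
          rwa [hendeq] at this
        · intro x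
          have := hw' x
          have hendeq : endpos β ((k₀, e.2) :: r2) = endpos β ((k₀, γ) :: rest) := by
            show endpos e.2 r2 = endpos γ rest
            rw [hsplit]
            exact (pvalid_append_elim v w r1 e r2 γ (hsplit ▸ hval.2)).2.2.symm
          rwa [hendeq] at this
      · -- fresh column: exchange and recurse
        push_neg at hrep
        obtain ⟨γv, hγvB, hγv⟩ := sep_exchange (hBj k₀) (v k₀).2 (w k₀).2 hcond.1 hcond.2
        obtain ⟨γw, hγwB, hγw⟩ := sep_exchange (hBj k₀) (w k₀).2 (v k₀).2 hcond.2 hcond.1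
        have hval₁ : pvalid (Function.update v k₀ (⟨γv, hγvB⟩ : ↥(Bj k₀)))
            (Function.update w k₀ (⟨γw, hγwB⟩ : ↥(Bj k₀))) γ rest :=
          pvalid_update v w k₀ _ _ rest γ hrep hrest
        have hlen₁ : rest.length < N := by simp at hlen; omega
        obtain ⟨v', w', hv', hw'⟩ := IH rest.length hlen₁ rest (le_refl _)
          (Function.update v k₀ (⟨γv, hγvB⟩ : ↥(Bj k₀)))
          (Function.update w k₀ (⟨γw, hγwB⟩ : ↥(Bj k₀))) γ hval₁
        have htv : ∀ x, tot Bj (Function.update v k₀ (⟨γv, hγvB⟩ : ↥(Bj k₀))) x + eVec β x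
            = tot Bj v x + eVec γ x := by
          intro x
          have h1 : tot Bj (Function.update v k₀ (⟨γv, hγvB⟩ : ↥(Bj k₀))) x
              + (v k₀ : Fin n → ℕ) x = tot Bj v x + γv x := tot_update v k₀ _ x
          have h2 := hγv x
          omega
        have htw : ∀ x, tot Bj (Function.update w k₀ (⟨γw, hγwB⟩ : ↥(Bj k₀))) x + eVec γ x
            = tot Bj w x + eVec β x := by
          intro x
          have h1 : tot Bj (Function.update w k₀ (⟨γw, hγwB⟩ : ↥(Bj k₀))) x
              + (w k₀ : Fin n → ℕ) x = tot Bj w x + γw x := tot_update w k₀ _ x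
          have h2 := hγw x
          omega
        refine ⟨v', w', ?_, ?_⟩
        · intro x
          have h1 := hv' x
          have h2 := htv x
          show tot Bj v' x + eVec β x = tot Bj v x + eVec (endpos γ rest) x
          omega
        · intro x
          have h1 := hw' x
          have h2 := htw x
          show tot Bj w' x + eVec (endpos γ rest) x = tot Bj w x + eVec β x
          omega

/-- Single-step exchange relation between coordinates. -/
def estep (v w : (j : Fin s) → ↥(Bj j)) (α β : Fin n) : Prop :=
  ∃ k, (w k : Fin n → ℕ) α < (v k : Fin n → ℕ) α ∧ (v k : Fin n → ℕ) β < (w k : Fin n → ℕ) β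

lemma pvalid_append_single (v w : (j : Fin s) → ↥(Bj j)) (k : Fin s) (m : Fin n) :
    ∀ (l : List (Fin s × Fin n)) (β : Fin n), pvalid v w β l →
      ((w k : Fin n → ℕ) (endpos β l) < (v k : Fin n → ℕ) (endpos β l) ∧
       (v k : Fin n → ℕ) m < (w k : Fin n → ℕ) m) →
      pvalid v w β (l ++ [(k, m)]) ∧ endpos β (l ++ [(k, m)]) = m := by
  intro l
  induction l with
  | nil => intro β _ hc; exact ⟨⟨hc, trivial⟩, rfl⟩
  | cons e rest ih =>
    intro β h hc
    obtain ⟨h1, h2⟩ := ih e.2 h.2 hc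
    exact ⟨⟨h.1, h1⟩, h2⟩

lemma reach_to_list (v w : (j : Fin s) → ↥(Bj j)) (j m : Fin n)
    (h : Relation.ReflTransGen (estep v w) j m) :
    ∃ l, pvalid v w j l ∧ endpos j l = m := by
  induction h with
  | refl => exact ⟨[], trivial, rfl⟩
  | tail _ hstep ih =>
    obtain ⟨l, hl, hend⟩ := ih
    obtain ⟨k, hk1, hk2⟩ := hstep
    rw [← hend] at hk1
    obtain ⟨h1, h2⟩ := pvalid_append_single v w k _ l j hl ⟨hk1, hk2⟩
    exact ⟨l ++ [(k, _)], h1, h2⟩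

/-- The exchange lemma for sums: if `tot v` exceeds `tot w` at `j`, there is a
coordinate `m` where `tot v` is deficient and a "unit transfer" of both tuples. -/
lemma sum_exchange (hBj : ∀ j, IsSEP (Bj j) (dg j)) (v w : (j : Fin s) → ↥(Bj j))
    (j : Fin n) (h : tot Bj w j < tot Bj v j) :
    ∃ m, tot Bj v m < tot Bj w m ∧
      ∃ v' w' : (j : Fin s) → ↥(Bj j),
        (∀ x, tot Bj v' x + eVec j x = tot Bj v x + eVec m x) ∧
        (∀ x, tot Bj w' x + eVec m x = tot Bj w x + eVec j x) := by
  classical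
  -- first, find a reachable deficient coordinate
  have hex : ∃ m, Relation.ReflTransGen (estep v w) j m ∧ tot Bj v m < tot Bj w m := by
    by_contra hcon
    push_neg at hcon
    set p : Fin n → Prop := fun m => Relation.ReflTransGen (estep v w) j m with hp
    have hjp : p j := Relation.ReflTransGen.refl
    -- per-column inequality over the reachable set
    have hcol : ∀ k : Fin s,
        ∑ β ∈ Finset.univ.filter p, (v k : Fin n → ℕ) β
          ≤ ∑ β ∈ Finset.univ.filter p, (w k : Fin n → ℕ) β := by
      intro k
      by_cases hk : ∃ α, p α ∧ (w k : Fin n → ℕ) α < (v k : Fin n → ℕ) α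
      · obtain ⟨α, hαp, hαk⟩ := hk
        have hclose : ∀ β, (v k : Fin n → ℕ) β < (w k : Fin n → ℕ) β → p β := by
          intro β hβ
          exact Relation.ReflTransGen.tail hαp ⟨k, hαk, hβ⟩
        have hnot : ∀ β ∈ Finset.univ.filter (fun β => ¬ p β),
            (w k : Fin n → ℕ) β ≤ (v k : Fin n → ℕ) β := by
          intro β hβ
          simp only [Finset.mem_filter] at hβ
          by_contra hb
          push_neg at hb
          exact hβ.2 (hclose β hb)
        have hdv : ∑ β, (v k : Fin n → ℕ) β = dg k := col_degree hBj v k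
        have hdw : ∑ β, (w k : Fin n → ℕ) β = dg k := col_degree hBj w k
        have hsv : (∑ β ∈ Finset.univ.filter p, (v k : Fin n → ℕ) β)
            + (∑ β ∈ Finset.univ.filter (fun β => ¬ p β), (v k : Fin n → ℕ) β) = dg k := by
          rw [Finset.sum_filter_add_sum_filter_not]; exact hdv
        have hsw : (∑ β ∈ Finset.univ.filter p, (w k : Fin n → ℕ) β)
            + (∑ β ∈ Finset.univ.filter (fun β => ¬ p β), (w k : Fin n → ℕ) β) = dg k := by
          rw [Finset.sum_filter_add_sum_filter_not]; exact hdw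
        have hle : ∑ β ∈ Finset.univ.filter (fun β => ¬ p β), (w k : Fin n → ℕ) β
            ≤ ∑ β ∈ Finset.univ.filter (fun β => ¬ p β), (v k : Fin n → ℕ) β :=
          Finset.sum_le_sum hnot
        omega
      · push_neg at hk
        apply Finset.sum_le_sum
        intro β hβ
        simp only [Finset.mem_filter] at hβ
        exact hk β hβ.2
    -- sum the per-column inequalities
    have htot : ∑ β ∈ Finset.univ.filter p, tot Bj v β
        ≤ ∑ β ∈ Finset.univ.filter p, tot Bj w β := by
      have hv : ∑ β ∈ Finset.univ.filter p, tot Bj v β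
          = ∑ k, ∑ β ∈ Finset.univ.filter p, (v k : Fin n → ℕ) β := by
        rw [Finset.sum_comm]
        exact Finset.sum_congr rfl fun β _ => tot_apply v β
      have hw : ∑ β ∈ Finset.univ.filter p, tot Bj w β
          = ∑ k, ∑ β ∈ Finset.univ.filter p, (w k : Fin n → ℕ) β := by
        rw [Finset.sum_comm]
        exact Finset.sum_congr rfl fun β _ => tot_apply w β
      rw [hv, hw]
      exact Finset.sum_le_sum fun k _ => hcol k
    -- strict inequality the other way
    have hstrict : ∑ β ∈ Finset.univ.filter p, tot Bj w β
        < ∑ β ∈ Finset.univ.filter p, tot Bj v β := by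
      apply Finset.sum_lt_sum
      · intro β hβ
        simp only [Finset.mem_filter] at hβ
        exact hcon β hβ.2
      · exact ⟨j, Finset.mem_filter.mpr ⟨Finset.mem_univ _, hjp⟩, h⟩
    omega
  obtain ⟨m, hreach, hm⟩ := hex
  obtain ⟨l, hl, hend⟩ := reach_to_list v w j m hreach
  obtain ⟨v', w', hv', hw'⟩ := construct_aux hBj l.length l (le_refl _) v w j hl
  rw [hend] at hv' hw'
  exact ⟨m, hm, v', w', hv', hw'⟩


lemma sum_eVec (p : Fin n) : ∑ x, eVec p x = 1 := by
  simp [eVec]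

lemma sum_two_split (f : Fin n → ℕ) {i j : Fin n} (hij : i ≠ j) :
    ∑ x, f x = f i + f j + ∑ x ∈ (Finset.univ.erase i).erase j, f x := by
  have h1 : ∑ x, f x = f i + ∑ x ∈ Finset.univ.erase i, f x :=
    (Finset.add_sum_erase _ f (Finset.mem_univ i)).symm
  have hj' : j ∈ Finset.univ.erase i := Finset.mem_erase.mpr ⟨Ne.symm hij, Finset.mem_univ j⟩
  have h2 : ∑ x ∈ Finset.univ.erase i, f x = f j + ∑ x ∈ (Finset.univ.erase i).erase j, f x :=
    (Finset.add_sum_erase _ f hj').symm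
  omega

/-- A unit move of a pair inside a SEP basis, together with all relevant data. -/
lemma move_pack {B : Finset (Fin n → ℕ)} {d : ℕ} (hB : IsSEP B d) {a b ξ ξc : Fin n → ℕ}
    (haB : a ∈ B) (hbB : b ∈ B)
    (hξ : ξ ∈ B) (hξc : ξc ∈ B) (hadd : ∀ x, ξ x + ξc x = a x + b x)
    (hlo : ∀ x, min (a x) (b x) ≤ ξ x) (hhi : ∀ x, ξ x ≤ max (a x) (b x))
    {i j : Fin n} (hi : ξ i < b i) (hj : b j < ξ j) :
    ∃ ξ' ξc' : Fin n → ℕ, ξ' ∈ B ∧ ξc' ∈ B ∧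
      (∀ x, ξ' x + eVec j x = ξ x + eVec i x) ∧
      (∀ x, ξc' x + eVec i x = ξc x + eVec j x) ∧
      (∀ x, ξ' x + ξc' x = a x + b x) ∧
      (∀ x, min (a x) (b x) ≤ ξ' x) ∧ (∀ x, ξ' x ≤ max (a x) (b x)) ∧
      (∑ x, ((ξ' x - b x) + (b x - ξ' x))) + 2 = ∑ x, ((ξ x - b x) + (b x - ξ x)) := by
  have hij : i ≠ j := by
    intro h; rw [h] at hi; omega
  have hξj1 : 1 ≤ ξ j := by omega
  have hξci1 : 1 ≤ ξc i := by
    have h1 := hadd i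
    have h2 := hlo i
    have h3 : min (a i) (b i) ≤ a i := min_le_left _ _
    omega
  set ξ' := Function.update (Function.update ξ i (ξ i + 1)) j (ξ j - 1) with hξ'def
  set ξc' := Function.update (Function.update ξc i (ξc i - 1)) j (ξc j + 1) with hξc'def
  have hs1 : ∀ x, ξ' x + eVec j x = ξ x + eVec i x := by
    intro x
    by_cases hxi : x = i
    · rw [hξ'def, hxi, Function.update_of_ne hij, Function.update_self]
      simp [eVec, hij]
    · by_cases hxj : x = j
      · rw [hξ'def, hxj, Function.update_self]
        simp [eVec, Ne.symm hij]
        omega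
      · rw [hξ'def, Function.update_of_ne hxj, Function.update_of_ne hxi]
        simp [eVec, hxi, hxj]
  have hs2 : ∀ x, ξc' x + eVec i x = ξc x + eVec j x := by
    intro x
    by_cases hxi : x = i
    · rw [hξc'def, hxi, Function.update_of_ne hij, Function.update_self]
      simp [eVec, hij]
      omega
    · by_cases hxj : x = j
      · rw [hξc'def, hxj, Function.update_self]
        simp [eVec, Ne.symm hij]
      · rw [hξc'def, Function.update_of_ne hxj, Function.update_of_ne hxi]
        simp [eVec, hxi, hxj]
  -- pointwise values
  have hv : ∀ x, (x = i → ξ' x = ξ x + 1 ∧ ξc' x + 1 = ξc x) ∧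
      (x = j → ξ' x + 1 = ξ x ∧ ξc' x = ξc x + 1) ∧
      (x ≠ i → x ≠ j → ξ' x = ξ x ∧ ξc' x = ξc x) := by
    intro x
    refine ⟨?_, ?_, ?_⟩
    · intro hxi
      rw [hxi]
      have h1 := hs1 i; have h2 := hs2 i
      simp [eVec, hij] at h1 h2
      omega
    · intro hxj
      rw [hxj]
      have h1 := hs1 j; have h2 := hs2 j
      simp [eVec, Ne.symm hij] at h1 h2
      omega
    · intro hxi hxj
      have h1 := hs1 x; have h2 := hs2 x
      simp [eVec, hxi, hxj] at h1 h2
      omega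
  have hadd' : ∀ x, ξ' x + ξc' x = a x + b x := by
    intro x
    have h0 := hadd x
    by_cases hxi : x = i
    · have := (hv x).1 hxi; omega
    · by_cases hxj : x = j
      · have := (hv x).2.1 hxj; omega
      · have := (hv x).2.2 hxi hxj; omega
  have hlo' : ∀ x, min (a x) (b x) ≤ ξ' x := by
    intro x
    have h0 := hlo x
    by_cases hxi : x = i
    · have := (hv x).1 hxi; omega
    · by_cases hxj : x = j
      · have h1 := (hv x).2.1 hxj
        have h2 := hhi x
        rw [hxj] at h0 h1 h2 ⊢
        omega
      · have := (hv x).2.2 hxi hxj; omega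
  have hhi' : ∀ x, ξ' x ≤ max (a x) (b x) := by
    intro x
    have h0 := hhi x
    by_cases hxi : x = i
    · have h1 := (hv x).1 hxi
      rw [hxi] at h1 h0 ⊢
      have h2 := hlo i
      omega
    · by_cases hxj : x = j
      · have := (hv x).2.1 hxj; omega
      · have := (hv x).2.2 hxi hxj; omega
  -- degree computations
  have hsξ : ∑ x, ξ x = d := hB.2.1 ξ hξ
  have hsa : ∑ x, a x = d := hB.2.1 a haB
  have hsb : ∑ x, b x = d := hB.2.1 b hbB
  have hsξ' : ∑ x, ξ' x = d := by
    have h1 : ∑ x, (ξ' x + eVec j x) = ∑ x, (ξ x + eVec i x) :=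
      Finset.sum_congr rfl fun x _ => hs1 x
    rw [Finset.sum_add_distrib, Finset.sum_add_distrib, sum_eVec, sum_eVec] at h1
    omega
  have hsξc' : ∑ x, ξc' x = d := by
    have h1 : ∑ x, (ξ' x + ξc' x) = ∑ x, (a x + b x) :=
      Finset.sum_congr rfl fun x _ => hadd' x
    rw [Finset.sum_add_distrib, Finset.sum_add_distrib] at h1
    omega
  have hξ'B : ξ' ∈ B := interval_mem hB hbB ξ' hsξ' _ a haB hlo' hhi' (le_refl _)
  have hξc'B : ξc' ∈ B := by
    apply interval_mem hB hbB ξc' hsξc' _ a haB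
    · intro x
      have h1 := hadd' x
      have h2 := hhi' x
      omega
    · intro x
      have h1 := hadd' x
      have h2 := hlo' x
      omega
    · exact le_refl _
  refine ⟨ξ', ξc', hξ'B, hξc'B, hs1, hs2, hadd', hlo', hhi', ?_⟩
  have e1 := sum_two_split (fun x => (ξ' x - b x) + (b x - ξ' x)) hij
  have e2 := sum_two_split (fun x => (ξ x - b x) + (b x - ξ x)) hij
  have e3 : ∑ x ∈ (Finset.univ.erase i).erase j, ((ξ' x - b x) + (b x - ξ' x))
      = ∑ x ∈ (Finset.univ.erase i).erase j, ((ξ x - b x) + (b x - ξ x)) := by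
    apply Finset.sum_congr rfl
    intro x hx
    have hxj : x ≠ j := (Finset.mem_erase.mp hx).1
    have hxi : x ≠ i := (Finset.mem_erase.mp (Finset.mem_erase.mp hx).2).1
    have := (hv x).2.2 hxi hxj
    omega
  have f1 := (hv i).1 rfl
  have f2 := (hv j).2.1 rfl
  omega

section WithField

variable {K : Type*} [Field K]

lemma gen_mem_E {r₁ s₁ t₁ u₁ : (j : Fin s) → ↥(Bj j)} {i₁ i₂ : Fin n}
    (h1 : tot Bj s₁ i₁ < tot Bj r₁ i₁) (h2 : tot Bj r₁ i₂ < tot Bj s₁ i₂)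
    (h3 : ∀ x, tot Bj t₁ x + eVec i₁ x = tot Bj r₁ x + eVec i₂ x)
    (h4 : ∀ x, tot Bj u₁ x + eVec i₂ x = tot Bj s₁ x + eVec i₁ x) :
    (X r₁ * X s₁ - X t₁ * X u₁ : MvPolynomial ((j : Fin s) → ↥(Bj j)) K) ∈ idealE Bj K := by
  apply Ideal.subset_span
  exact ⟨r₁, s₁, t₁, u₁, i₁, i₂, h1, h2, funext h3, funext h4, rfl⟩

lemma swap_aux (hBj : ∀ j, IsSEP (Bj j) (dg j)) (r₀ s₀ : (j : Fin s) → ↥(Bj j)) (c : Fin s) :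
    ∀ N : ℕ, ∀ (ξ ξc : Fin n → ℕ) (hξ : ξ ∈ Bj c) (hξc : ξc ∈ Bj c),
      (∀ x, ξ x + ξc x = (r₀ c : Fin n → ℕ) x + (s₀ c : Fin n → ℕ) x) →
      (∀ x, min ((r₀ c : Fin n → ℕ) x) ((s₀ c : Fin n → ℕ) x) ≤ ξ x) →
      (∀ x, ξ x ≤ max ((r₀ c : Fin n → ℕ) x) ((s₀ c : Fin n → ℕ) x)) →
      ((∑ x, ((ξ x - (s₀ c : Fin n → ℕ) x) + ((s₀ c : Fin n → ℕ) x - ξ x))) ≤ N) →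
      (X (Function.update r₀ c (⟨ξ, hξ⟩ : ↥(Bj c))) *
          X (Function.update s₀ c (⟨ξc, hξc⟩ : ↥(Bj c)))
        - X (Function.update r₀ c (s₀ c)) * X (Function.update s₀ c (r₀ c))
        : MvPolynomial ((j : Fin s) → ↥(Bj j)) K) ∈ idealE Bj K := by
  intro N
  induction N using Nat.strong_induction_on with
  | _ N IH =>
  intro ξ ξc hξ hξc hadd hlo hhi hmeas
  by_cases hfin : ∀ x, ξ x = (s₀ c : Fin n → ℕ) x
  · have hξb : (⟨ξ, hξ⟩ : ↥(Bj c)) = s₀ c := Subtype.ext (funext hfin)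
    have hξca : (⟨ξc, hξc⟩ : ↥(Bj c)) = r₀ c := by
      apply Subtype.ext; funext x
      show ξc x = (r₀ c : Fin n → ℕ) x
      have h1 := hadd x; have h2 := hfin x
      omega
    rw [hξb, hξca, sub_self]
    exact (idealE Bj K).zero_mem
  · push_neg at hfin
    have hsξ : ∑ x, ξ x = dg c := (hBj c).2.1 ξ hξ
    have hsb : ∑ x, (s₀ c : Fin n → ℕ) x = dg c := (hBj c).2.1 _ (s₀ c).2
    have hP : ∃ i, ξ i < (s₀ c : Fin n → ℕ) i := by
      by_contra hcon
      push_neg at hcon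
      obtain ⟨x₀, hx₀⟩ := hfin
      have : ∑ x, (s₀ c : Fin n → ℕ) x < ∑ x, ξ x :=
        Finset.sum_lt_sum (fun x _ => hcon x)
          ⟨x₀, Finset.mem_univ _, lt_of_le_of_ne (hcon x₀) (Ne.symm hx₀)⟩
      omega
    have hN : ∃ j, (s₀ c : Fin n → ℕ) j < ξ j := by
      by_contra hcon
      push_neg at hcon
      obtain ⟨i, hi⟩ := hP
      have : ∑ x, ξ x < ∑ x, (s₀ c : Fin n → ℕ) x :=
        Finset.sum_lt_sum (fun x _ => hcon x) ⟨i, Finset.mem_univ _, hi⟩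
      omega
    have hX : ∀ x, tot Bj (Function.update r₀ c (⟨ξ, hξ⟩ : ↥(Bj c))) x
        + (r₀ c : Fin n → ℕ) x = tot Bj r₀ x + ξ x :=
      fun x => tot_update r₀ c _ x
    have hY : ∀ x, tot Bj (Function.update s₀ c (⟨ξc, hξc⟩ : ↥(Bj c))) x
        + (s₀ c : Fin n → ℕ) x = tot Bj s₀ x + ξc x :=
      fun x => tot_update s₀ c _ x
    by_cases HR1 : ∃ i j, ξ i < (s₀ c : Fin n → ℕ) i ∧ (s₀ c : Fin n → ℕ) j < ξ j ∧
        ¬((tot Bj (Function.update s₀ c (⟨ξc, hξc⟩ : ↥(Bj c))) i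
              ≤ tot Bj (Function.update r₀ c (⟨ξ, hξ⟩ : ↥(Bj c))) i ∧
           tot Bj (Function.update s₀ c (⟨ξc, hξc⟩ : ↥(Bj c))) j + 2
              ≤ tot Bj (Function.update r₀ c (⟨ξ, hξ⟩ : ↥(Bj c))) j) ∨
          (tot Bj (Function.update r₀ c (⟨ξ, hξ⟩ : ↥(Bj c))) i + 2
              ≤ tot Bj (Function.update s₀ c (⟨ξc, hξc⟩ : ↥(Bj c))) i ∧
           tot Bj (Function.update r₀ c (⟨ξ, hξ⟩ : ↥(Bj c))) j
              ≤ tot Bj (Function.update s₀ c (⟨ξc, hξc⟩ : ↥(Bj c))) j))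
    · -- R1 : a single valid move
      obtain ⟨i, j, hi, hj, hval⟩ := HR1
      have hij : i ≠ j := by intro h; rw [h] at hi; omega
      obtain ⟨ξ', ξc', hξ'B, hξc'B, hs1, hs2, hadd', hlo', hhi', hmdec⟩ :=
        move_pack (hBj c) (r₀ c).2 (s₀ c).2 hξ hξc hadd hlo hhi hi hj
      have hX' : ∀ x, tot Bj (Function.update r₀ c (⟨ξ', hξ'B⟩ : ↥(Bj c))) x
          + (r₀ c : Fin n → ℕ) x = tot Bj r₀ x + ξ' x :=
        fun x => tot_update r₀ c _ x
      have hY' : ∀ x, tot Bj (Function.update s₀ c (⟨ξc', hξc'B⟩ : ↥(Bj c))) x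
          + (s₀ c : Fin n → ℕ) x = tot Bj s₀ x + ξc' x :=
        fun x => tot_update s₀ c _ x
      have hedge : (X (Function.update r₀ c (⟨ξ, hξ⟩ : ↥(Bj c))) *
            X (Function.update s₀ c (⟨ξc, hξc⟩ : ↥(Bj c)))
          - X (Function.update r₀ c (⟨ξ', hξ'B⟩ : ↥(Bj c))) *
            X (Function.update s₀ c (⟨ξc', hξc'B⟩ : ↥(Bj c)))
          : MvPolynomial ((j : Fin s) → ↥(Bj j)) K) ∈ idealE Bj K := by
        by_cases hc1 : tot Bj (Function.update r₀ c (⟨ξ, hξ⟩ : ↥(Bj c))) i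
              < tot Bj (Function.update s₀ c (⟨ξc, hξc⟩ : ↥(Bj c))) i ∧
            tot Bj (Function.update s₀ c (⟨ξc, hξc⟩ : ↥(Bj c))) j
              < tot Bj (Function.update r₀ c (⟨ξ, hξ⟩ : ↥(Bj c))) j
        · refine gen_mem_E hc1.2 hc1.1 (fun x => ?_) (fun x => ?_)
          · have e1 := hX x; have e2 := hX' x; have e3 := hs1 x
            omega
          · have e1 := hY x; have e2 := hY' x; have e3 := hs2 x
            omega
        · have hne : (X (Function.update r₀ c (⟨ξ', hξ'B⟩ : ↥(Bj c))) *
              X (Function.update s₀ c (⟨ξc', hξc'B⟩ : ↥(Bj c)))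
            - X (Function.update r₀ c (⟨ξ, hξ⟩ : ↥(Bj c))) *
              X (Function.update s₀ c (⟨ξc, hξc⟩ : ↥(Bj c)))
            : MvPolynomial ((j : Fin s) → ↥(Bj j)) K) ∈ idealE Bj K := by
            refine gen_mem_E (i₁ := i) (i₂ := j) ?_ ?_ (fun x => ?_) (fun x => ?_)
            · have e1 := hX i; have e2 := hX' i; have e3 := hY i; have e4 := hY' i
              have f1 := hs1 i; have f2 := hs2 i
              simp [eVec, hij] at f1 f2
              have g1 := hX j; have g2 := hY j
              omega
            · have e1 := hX j; have e2 := hX' j; have e3 := hY j; have e4 := hY' j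
              have f1 := hs1 j; have f2 := hs2 j
              simp [eVec, Ne.symm hij] at f1 f2
              have g1 := hX i; have g2 := hY i
              omega
            · have e1 := hX x; have e2 := hX' x; have e3 := hs1 x
              omega
            · have e1 := hY x; have e2 := hY' x; have e3 := hs2 x
              omega
          have := (idealE Bj K).neg_mem hne
          rwa [neg_sub] at this
      have hG' := IH (N - 1) (by omega) ξ' ξc' hξ'B hξc'B hadd' hlo' hhi' (by omega)
      have := (idealE Bj K).add_mem hedge hG'
      rwa [sub_add_sub_cancel] at this
    · -- stuck case: use an exchange fix
      push_neg at HR1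
      obtain ⟨i₀, hi₀⟩ := hP
      obtain ⟨j₀, hj₀⟩ := hN
      have hij₀ : i₀ ≠ j₀ := by intro h; rw [h] at hi₀; omega
      rcases HR1 i₀ j₀ hi₀ hj₀ with hD1 | hD2
      · -- case I
        have hIP : ∀ i, ξ i < (s₀ c : Fin n → ℕ) i →
            tot Bj (Function.update s₀ c (⟨ξc, hξc⟩ : ↥(Bj c))) i
              ≤ tot Bj (Function.update r₀ c (⟨ξ, hξ⟩ : ↥(Bj c))) i := by
          intro i hi
          rcases HR1 i j₀ hi hj₀ with h | h
          · exact h.1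
          · exfalso; have := hD1.2; have := h.2; omega
        have hIN : ∀ j, (s₀ c : Fin n → ℕ) j < ξ j →
            tot Bj (Function.update s₀ c (⟨ξc, hξc⟩ : ↥(Bj c))) j + 2
              ≤ tot Bj (Function.update r₀ c (⟨ξ, hξ⟩ : ↥(Bj c))) j := by
          intro j hj
          rcases HR1 i₀ j hi₀ hj with h | h
          · exact h.2
          · exfalso; have := hD1.1; have := h.1; omega
        have hYX : tot Bj (Function.update s₀ c (⟨ξc, hξc⟩ : ↥(Bj c))) j₀
            < tot Bj (Function.update r₀ c (⟨ξ, hξ⟩ : ↥(Bj c))) j₀ := by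
          have := hD1.2; omega
        obtain ⟨m, hm, v₁, w₁, hv₁, hw₁⟩ :=
          sum_exchange hBj (Function.update r₀ c (⟨ξ, hξ⟩ : ↥(Bj c)))
            (Function.update s₀ c (⟨ξc, hξc⟩ : ↥(Bj c))) j₀ hYX
        have hmb : ξ m = (s₀ c : Fin n → ℕ) m := by
          rcases lt_trichotomy (ξ m) ((s₀ c : Fin n → ℕ) m) with h | h | h
          · have := hIP m h; omega
          · exact h
          · have := hIN m h; omega
        have hmi : m ≠ i₀ := by intro h; rw [h] at hmb; omega
        have hmj : m ≠ j₀ := by intro h; rw [h] at hmb; omega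
        obtain ⟨ξ', ξc', hξ'B, hξc'B, hs1, hs2, hadd', hlo', hhi', hmdec⟩ :=
          move_pack (hBj c) (r₀ c).2 (s₀ c).2 hξ hξc hadd hlo hhi hi₀ hj₀
        have hX' : ∀ x, tot Bj (Function.update r₀ c (⟨ξ', hξ'B⟩ : ↥(Bj c))) x
            + (r₀ c : Fin n → ℕ) x = tot Bj r₀ x + ξ' x :=
          fun x => tot_update r₀ c _ x
        have hY' : ∀ x, tot Bj (Function.update s₀ c (⟨ξc', hξc'B⟩ : ↥(Bj c))) x
            + (s₀ c : Fin n → ℕ) x = tot Bj s₀ x + ξc' x :=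
          fun x => tot_update s₀ c _ x
        have g1 : (X (Function.update r₀ c (⟨ξ, hξ⟩ : ↥(Bj c))) *
              X (Function.update s₀ c (⟨ξc, hξc⟩ : ↥(Bj c))) - X v₁ * X w₁
            : MvPolynomial ((j : Fin s) → ↥(Bj j)) K) ∈ idealE Bj K :=
          gen_mem_E hYX hm hv₁ hw₁
        have g2 : (X (Function.update r₀ c (⟨ξ', hξ'B⟩ : ↥(Bj c))) *
              X (Function.update s₀ c (⟨ξc', hξc'B⟩ : ↥(Bj c))) - X v₁ * X w₁
            : MvPolynomial ((j : Fin s) → ↥(Bj j)) K) ∈ idealE Bj K := by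
          refine gen_mem_E (i₁ := i₀) (i₂ := m) ?_ ?_ (fun x => ?_) (fun x => ?_)
          · have e1 := hX i₀; have e2 := hX' i₀; have e3 := hY i₀; have e4 := hY' i₀
            have f1 := hs1 i₀; have f2 := hs2 i₀
            simp [eVec, hij₀] at f1 f2
            have := hD1.1
            omega
          · have e1 := hX m; have e2 := hX' m; have e3 := hY m; have e4 := hY' m
            have f1 := hs1 m; have f2 := hs2 m
            simp [eVec, hmi, hmj] at f1 f2
            omega
          · have e1 := hX x; have e2 := hX' x; have e3 := hs1 x; have e4 := hv₁ x
            omega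
          · have e1 := hY x; have e2 := hY' x; have e3 := hs2 x; have e4 := hw₁ x
            omega
        have hedge : (X (Function.update r₀ c (⟨ξ, hξ⟩ : ↥(Bj c))) *
              X (Function.update s₀ c (⟨ξc, hξc⟩ : ↥(Bj c)))
            - X (Function.update r₀ c (⟨ξ', hξ'B⟩ : ↥(Bj c))) *
              X (Function.update s₀ c (⟨ξc', hξc'B⟩ : ↥(Bj c)))
            : MvPolynomial ((j : Fin s) → ↥(Bj j)) K) ∈ idealE Bj K := by
          have := (idealE Bj K).sub_mem g1 g2
          rwa [sub_sub_sub_cancel_right] at this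
        have hG' := IH (N - 1) (by omega) ξ' ξc' hξ'B hξc'B hadd' hlo' hhi' (by omega)
        have := (idealE Bj K).add_mem hedge hG'
        rwa [sub_add_sub_cancel] at this
      · -- case II
        have hIIP : ∀ i, ξ i < (s₀ c : Fin n → ℕ) i →
            tot Bj (Function.update r₀ c (⟨ξ, hξ⟩ : ↥(Bj c))) i + 2
              ≤ tot Bj (Function.update s₀ c (⟨ξc, hξc⟩ : ↥(Bj c))) i := by
          intro i hi
          rcases HR1 i j₀ hi hj₀ with h | h
          · exfalso; have := hD2.2; have := h.2; omega
          · exact h.1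
        have hIIN : ∀ j, (s₀ c : Fin n → ℕ) j < ξ j →
            tot Bj (Function.update r₀ c (⟨ξ, hξ⟩ : ↥(Bj c))) j
              ≤ tot Bj (Function.update s₀ c (⟨ξc, hξc⟩ : ↥(Bj c))) j := by
          intro j hj
          rcases HR1 i₀ j hi₀ hj with h | h
          · exfalso; have := hD2.1; have := h.1; omega
          · exact h.2
        have hXY : tot Bj (Function.update r₀ c (⟨ξ, hξ⟩ : ↥(Bj c))) i₀
            < tot Bj (Function.update s₀ c (⟨ξc, hξc⟩ : ↥(Bj c))) i₀ := by
          have := hD2.1; omega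
        obtain ⟨q, hq, w₁, v₁, hw₁, hv₁⟩ :=
          sum_exchange hBj (Function.update s₀ c (⟨ξc, hξc⟩ : ↥(Bj c)))
            (Function.update r₀ c (⟨ξ, hξ⟩ : ↥(Bj c))) i₀ hXY
        have hqb : ξ q = (s₀ c : Fin n → ℕ) q := by
          rcases lt_trichotomy (ξ q) ((s₀ c : Fin n → ℕ) q) with h | h | h
          · have := hIIP q h; omega
          · exact h
          · have := hIIN q h; omega
        have hqi : q ≠ i₀ := by intro h; rw [h] at hqb; omega
        have hqj : q ≠ j₀ := by intro h; rw [h] at hqb; omega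
        obtain ⟨ξ', ξc', hξ'B, hξc'B, hs1, hs2, hadd', hlo', hhi', hmdec⟩ :=
          move_pack (hBj c) (r₀ c).2 (s₀ c).2 hξ hξc hadd hlo hhi hi₀ hj₀
        have hX' : ∀ x, tot Bj (Function.update r₀ c (⟨ξ', hξ'B⟩ : ↥(Bj c))) x
            + (r₀ c : Fin n → ℕ) x = tot Bj r₀ x + ξ' x :=
          fun x => tot_update r₀ c _ x
        have hY' : ∀ x, tot Bj (Function.update s₀ c (⟨ξc', hξc'B⟩ : ↥(Bj c))) x
            + (s₀ c : Fin n → ℕ) x = tot Bj s₀ x + ξc' x :=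
          fun x => tot_update s₀ c _ x
        have g1 : (X (Function.update r₀ c (⟨ξ, hξ⟩ : ↥(Bj c))) *
              X (Function.update s₀ c (⟨ξc, hξc⟩ : ↥(Bj c))) - X v₁ * X w₁
            : MvPolynomial ((j : Fin s) → ↥(Bj j)) K) ∈ idealE Bj K :=
          gen_mem_E hq hXY hv₁ hw₁
        have g2 : (X (Function.update r₀ c (⟨ξ', hξ'B⟩ : ↥(Bj c))) *
              X (Function.update s₀ c (⟨ξc', hξc'B⟩ : ↥(Bj c))) - X v₁ * X w₁
            : MvPolynomial ((j : Fin s) → ↥(Bj j)) K) ∈ idealE Bj K := by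
          refine gen_mem_E (i₁ := q) (i₂ := j₀) ?_ ?_ (fun x => ?_) (fun x => ?_)
          · have e1 := hX q; have e2 := hX' q; have e3 := hY q; have e4 := hY' q
            have f1 := hs1 q; have f2 := hs2 q
            simp [eVec, hqi, hqj] at f1 f2
            omega
          · have e1 := hX j₀; have e2 := hX' j₀; have e3 := hY j₀; have e4 := hY' j₀
            have f1 := hs1 j₀; have f2 := hs2 j₀
            simp [eVec, Ne.symm hij₀] at f1 f2
            have := hIIN j₀ hj₀
            omega
          · have e1 := hX x; have e2 := hX' x; have e3 := hs1 x; have e4 := hv₁ x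
            omega
          · have e1 := hY x; have e2 := hY' x; have e3 := hs2 x; have e4 := hw₁ x
            omega
        have hedge : (X (Function.update r₀ c (⟨ξ, hξ⟩ : ↥(Bj c))) *
              X (Function.update s₀ c (⟨ξc, hξc⟩ : ↥(Bj c)))
            - X (Function.update r₀ c (⟨ξ', hξ'B⟩ : ↥(Bj c))) *
              X (Function.update s₀ c (⟨ξc', hξc'B⟩ : ↥(Bj c)))
            : MvPolynomial ((j : Fin s) → ↥(Bj j)) K) ∈ idealE Bj K := by
          have := (idealE Bj K).sub_mem g1 g2
          rwa [sub_sub_sub_cancel_right] at this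
        have hG' := IH (N - 1) (by omega) ξ' ξc' hξ'B hξc'B hadd' hlo' hhi' (by omega)
        have := (idealE Bj K).add_mem hedge hG'
        rwa [sub_add_sub_cancel] at this

lemma swap_mem_E (hBj : ∀ j, IsSEP (Bj j) (dg j)) (r₀ s₀ : (j : Fin s) → ↥(Bj j)) (c : Fin s) :
    (X r₀ * X s₀ - X (Function.update r₀ c (s₀ c)) * X (Function.update s₀ c (r₀ c))
      : MvPolynomial ((j : Fin s) → ↥(Bj j)) K) ∈ idealE Bj K := by
  have h := swap_aux (K := K) hBj r₀ s₀ c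
    (∑ x, (((r₀ c : Fin n → ℕ) x - (s₀ c : Fin n → ℕ) x)
      + ((s₀ c : Fin n → ℕ) x - (r₀ c : Fin n → ℕ) x)))
    (r₀ c : Fin n → ℕ) (s₀ c : Fin n → ℕ) (r₀ c).2 (s₀ c).2
    (fun x => rfl) (fun x => min_le_left _ _) (fun x => le_max_left _ _) (le_refl _)
  have e1 : (⟨(r₀ c : Fin n → ℕ), (r₀ c).2⟩ : ↥(Bj c)) = r₀ c := rfl
  have e2 : (⟨(s₀ c : Fin n → ℕ), (s₀ c).2⟩ : ↥(Bj c)) = s₀ c := rfl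
  rw [e1, e2, Function.update_eq_self, Function.update_eq_self] at h
  exact h

lemma prod_two_split {M : Type*} [CommMonoid M] (f : Fin n → M) {i j : Fin n} (hij : i ≠ j) :
    ∏ x, f x = f i * f j * ∏ x ∈ (Finset.univ.erase i).erase j, f x := by
  have hj' : j ∈ Finset.univ.erase i := Finset.mem_erase.mpr ⟨Ne.symm hij, Finset.mem_univ j⟩
  rw [← Finset.mul_prod_erase _ f (Finset.mem_univ i), ← Finset.mul_prod_erase _ f hj',
    mul_assoc]

lemma prod_diff_factor {M : Type*} [CommRing M] (f g : Fin n → M) {i j : Fin n} (hij : i ≠ j)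
    (hfg : ∀ x, x ≠ i → x ≠ j → f x = g x) :
    (∏ x, f x) - ∏ x, g x
      = (f i * f j - g i * g j) * ∏ x ∈ (Finset.univ.erase i).erase j, f x := by
  rw [prod_two_split f hij, prod_two_split g hij]
  have : ∏ x ∈ (Finset.univ.erase i).erase j, g x
      = ∏ x ∈ (Finset.univ.erase i).erase j, f x := by
    apply Finset.prod_congr rfl
    intro x hx
    have hxj : x ≠ j := (Finset.mem_erase.mp hx).1
    have hxi : x ≠ i := (Finset.mem_erase.mp (Finset.mem_erase.mp hx).2).1
    exact (hfg x hxi hxj).symm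
  rw [this]
  ring

lemma perm_mem_E (hBj : ∀ j, IsSEP (Bj j) (dg j)) {d : ℕ}
    (v : Fin d → ((j : Fin s) → ↥(Bj j))) (c : Fin s) (σ : Equiv.Perm (Fin d)) :
    ((∏ i, X (v i)) - (∏ i, X (Function.update (v i) c (v (σ i) c)))
      : MvPolynomial ((j : Fin s) → ↥(Bj j)) K) ∈ idealE Bj K := by
  refine Equiv.Perm.swap_induction_on σ ?_ ?_
  · have h : (fun i => X (Function.update (v i) c (v ((1 : Equiv.Perm (Fin d)) i) c)))
        = fun i => (X (v i) : MvPolynomial ((j : Fin s) → ↥(Bj j)) K) := by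
      funext i
      simp [Function.update_eq_self]
    rw [show (∏ i, X (Function.update (v i) c (v ((1 : Equiv.Perm (Fin d)) i) c))
        : MvPolynomial ((j : Fin s) → ↥(Bj j)) K) = ∏ i, X (v i) from Finset.prod_congr rfl
          (fun i _ => congrFun h i), sub_self]
    exact (idealE Bj K).zero_mem
  · intro τ x y hxy ih
    -- the two products differ at positions τ⁻¹ x and τ⁻¹ y
    set i₁ := τ⁻¹ x with hi₁
    set i₂ := τ⁻¹ y with hi₂
    have hτ₁ : τ i₁ = x := by rw [hi₁]; exact τ.apply_symm_apply x
    have hτ₂ : τ i₂ = y := by rw [hi₂]; exact τ.apply_symm_apply y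
    have hi12 : i₁ ≠ i₂ := by
      intro h
      rw [h] at hτ₁
      rw [hτ₁] at hτ₂
      exact hxy hτ₂
    have hστ₁ : (Equiv.swap x y * τ) i₁ = y := by
      rw [Equiv.Perm.mul_apply, hτ₁, Equiv.swap_apply_left]
    have hστ₂ : (Equiv.swap x y * τ) i₂ = x := by
      rw [Equiv.Perm.mul_apply, hτ₂, Equiv.swap_apply_right]
    have hστo : ∀ i, i ≠ i₁ → i ≠ i₂ → (Equiv.swap x y * τ) i = τ i := by
      intro i h1 h2
      rw [Equiv.Perm.mul_apply]
      apply Equiv.swap_apply_of_ne_of_ne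
      · intro h; apply h1; rw [hi₁, ← h]; exact (Equiv.symm_apply_apply τ i).symm
      · intro h; apply h2; rw [hi₂, ← h]; exact (Equiv.symm_apply_apply τ i).symm
    have hdiff : ((∏ i, X (Function.update (v i) c (v (τ i) c)))
        - (∏ i, X (Function.update (v i) c (v ((Equiv.swap x y * τ) i) c)))
        : MvPolynomial ((j : Fin s) → ↥(Bj j)) K) ∈ idealE Bj K := by
      rw [prod_diff_factor _ _ hi12 (fun i h1 h2 => by rw [hστo i h1 h2])]
      apply Ideal.mul_mem_right
      rw [hτ₁, hτ₂, hστ₁, hστ₂]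
      have hA' : Function.update (v i₁) c (v y c)
          = Function.update (Function.update (v i₁) c (v x c)) c
              ((Function.update (v i₂) c (v y c)) c) := by
        rw [Function.update_self, Function.update_idem]
      have hB' : Function.update (v i₂) c (v x c)
          = Function.update (Function.update (v i₂) c (v y c)) c
              ((Function.update (v i₁) c (v x c)) c) := by
        rw [Function.update_self, Function.update_idem]
      rw [hA', hB']
      exact swap_mem_E hBj _ _ c
    have := (idealE Bj K).add_mem ih hdiff
    rwa [sub_add_sub_cancel] at this

lemma sub_mem_ker (hBj : ∀ j, IsSEP (Bj j) (dg j)) {d : ℕ}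
    (v v' : Fin d → ((j : Fin s) → ↥(Bj j))) (c : Fin s) (σ : Equiv.Perm (Fin d))
    (hcol : ∀ i : Fin d, v' i c = v (σ i) c)
    (hother : ∀ i : Fin d, ∀ k : Fin s, k ≠ c → v' i k = v i k) :
    ((∏ i, X (v i)) - (∏ i, X (v' i)) : MvPolynomial ((j : Fin s) → ↥(Bj j)) K)
      ∈ RingHom.ker (phiT Bj K) := by
  rw [RingHom.mem_ker, map_sub, sub_eq_zero]
  have hφ : ∀ (w : Fin d → ((j : Fin s) → ↥(Bj j))),
      (phiT Bj K) (∏ i, X (w i))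
        = ∏ x, (X x : MvPolynomial (Fin n) K) ^ (∑ i, tot Bj (w i) x) := by
    intro w
    rw [map_prod]
    have h1 : ∀ i : Fin d, (phiT Bj K) (X (w i))
        = ∏ x, (X x : MvPolynomial (Fin n) K) ^ tot Bj (w i) x := by
      intro i
      simp [phiT]
    rw [Finset.prod_congr rfl (fun i _ => h1 i), Finset.prod_comm]
    exact Finset.prod_congr rfl (fun x _ => Finset.prod_pow_eq_pow_sum _ _ _)
  rw [hφ v, hφ v']
  apply Finset.prod_congr rfl
  intro x _
  congr 1
  -- exponent equality
  have h2 : ∀ (w : Fin d → ((j : Fin s) → ↥(Bj j))),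
      ∑ i, tot Bj (w i) x = ∑ k, ∑ i, (w i k : Fin n → ℕ) x := by
    intro w
    rw [Finset.sum_comm]
    exact Finset.sum_congr rfl fun i _ => tot_apply (w i) x
  rw [h2 v, h2 v']
  apply Finset.sum_congr rfl
  intro k _
  by_cases hk : k = c
  · subst hk
    have h3 : ∀ i, ((v' i k : Fin n → ℕ)) x = ((v (σ i) k : Fin n → ℕ)) x := by
      intro i; rw [hcol i]
    rw [Finset.sum_congr rfl (fun i _ => h3 i)]
    exact (Equiv.sum_comp σ (fun i => ((v i k : Fin n → ℕ)) x)).symm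
  · apply Finset.sum_congr rfl
    intro i _
    exact congrArg (fun t => ((t : ↥(Bj k)) : Fin n → ℕ) x) (hother i k hk).symm

lemma diff_mem_P (hBj : ∀ j, IsSEP (Bj j) (dg j)) {d : ℕ}
    (v v' : Fin d → ((j : Fin s) → ↥(Bj j))) (c : Fin s) (σ : Equiv.Perm (Fin d))
    (hcol : ∀ i : Fin d, v' i c = v (σ i) c)
    (hother : ∀ i : Fin d, ∀ k : Fin s, k ≠ c → v' i k = v i k) :
    ((∏ i, X (v i)) - (∏ i, X (v' i)) : MvPolynomial ((j : Fin s) → ↥(Bj j)) K)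
      ∈ idealP Bj K := by
  rcases Nat.eq_zero_or_pos d with hd | hd
  · subst hd
    simp
  · apply Ideal.subset_span
    exact ⟨d, hd, v, v', rfl, sub_mem_ker hBj v v' c σ hcol hother, c,
      fun i k hk => (hother i k hk).symm⟩

end WithField

end RC

/-- **Rearrangement lemma.** If `F' = y_{v'_1}⋯y_{v'_d}` is obtained from
`F = y_{v_1}⋯y_{v_d}` by permuting the entries of one column `c` by a permutation `σ`,
then `F − F' ∈ E ∩ P`. -/
theorem rearrange_column {n s : ℕ} (dg : Fin s → ℕ)
    (Bj : Fin s → Finset (Fin n → ℕ)) (hBj : ∀ j, IsSEP (Bj j) (dg j))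
    (K : Type*) [Field K] (d : ℕ)
    (v v' : Fin d → ((j : Fin s) → ↥(Bj j))) (c : Fin s) (σ : Equiv.Perm (Fin d))
    (hcol : ∀ i : Fin d, v' i c = v (σ i) c)
    (hother : ∀ i : Fin d, ∀ k : Fin s, k ≠ c → v' i k = v i k) :
    (∏ i, X (v i)) - (∏ i, X (v' i)) ∈ idealE Bj K ⊓ idealP Bj K := by
  have hv' : v' = fun i => Function.update (v i) c (v (σ i) c) := by
    funext i
    funext k
    by_cases hk : k = c
    · rw [hk, Function.update_self]
      exact hcol i
    · rw [Function.update_of_ne hk]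
      exact hother i k hk
  constructor
  · rw [hv']
    exact RC.perm_mem_E (K := K) hBj v c σ
  · exact RC.diff_mem_P (K := K) hBj v v' c σ hcol hother
end
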